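/- arXiv:1601.00637 — 3 statements merged into one kernel-verified Lean document; each statement's English description precedes it below -/
import Mathlib

section
/- Let E be a filtered complex in an abelian category with decreasing filtration F. Define filtered truncations by τ^F_{≥n}E_i = d^{−1}(F^{n+1−i}E_{i−1}) ∩ F^{n−i}E_i and τ^F_{≤n}E_i = E_i/(F^{n+1−i}E_i + d(F^{n−i}E_{i+1})). Then for all integers i, j there are natural isomorphisms gr^j_F τ^F_{≥i}E ≅ τ_{≥ i−j} gr^j_F E and gr^j_F τ^F_{≤i}E ≅ τ_{≤ i−j} gr^j_F E, where τ_{≥n}, τ_{≤n} on the right are the usual canonical truncations of complexes. -/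
section
variable {R : Type} [Ring R] {E : ℤ → Type}
variable [∀ i, AddCommGroup (E i)] [∀ i, Module R (E i)]

/-- Cast along an equality of degrees. -/
def castE {i i' : ℤ} (e : i = i') : E i ≃ₗ[R] E i' :=
  e ▸ LinearEquiv.refl R (E i)

end

/-!
STATEMENT 7.  Let `E` be a filtered complex of `R`-modules: `d i : E i → E (i-1)`,
`d ∘ d = 0`, with a decreasing filtration `F` by subcomplexes.  Filtered truncations are
defined by `τ^F_{≥a}E_m = d⁻¹(F^{a+1-m}E_{m-1}) ∩ F^{a-m}E_m` and
`τ^F_{≤a}E_m = E_m/(F^{a+1-m}E_m + d(F^{a-m}E_{m+1}))`.  Then for all integers `a, j`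
there are natural isomorphisms `gr^j_F τ^F_{≥a}E ≅ τ_{≥a-j} gr^j_F E` and
`gr^j_F τ^F_{≤a}E ≅ τ_{≤a-j} gr^j_F E` with the usual canonical truncations on the right.

Since `gr^j` of a subcomplex with the induced filtration injects into `gr^j E`, the first
isomorphism is stated as an equality of submodules of `gr^j E_m`:  the image of
`τ^F_{≥a}E_m ∩ F^jE_m` in `gr^j E_m` is `⊤` in degrees `m > a-j`, the kernel of the
induced differential in degree `m = a-j`, and `⊥` below.  The second is stated as a
degreewise isomorphism `gr^j(τ^F_{≤a}E)_m ≅ (τ_{≤a-j} gr^j E)_m`, where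
`gr^j(τ^F_{≤a}E)_m = F^jE_m/(F^{j+1}E_m + F^jE_m ∩ (F^{a+1-m}E_m + d(F^{a-m}E_{m+1})))`,
and the right-hand side is `gr^j E_m` for `m < a-j`, the cokernel of the induced
differential for `m = a-j`, and `0` for `m > a-j`.
-/
lemma castE_mem {R : Type} [Ring R] {E : ℤ → Type}
    [∀ i, AddCommGroup (E i)] [∀ i, Module R (E i)]
    (F : ℤ → ∀ i : ℤ, Submodule R (E i)) {i i' : ℤ} (e : i = i') (k : ℤ) (x : E i)
    (hx : x ∈ F k i) : castE (R := R) e x ∈ F k i' := by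
  subst e; exact hx

theorem statement7
    (R : Type) [Ring R] (E : ℤ → Type)
    [∀ i, AddCommGroup (E i)] [∀ i, Module R (E i)]
    (d : ∀ i : ℤ, E i →ₗ[R] E (i - 1))
    (hdd : ∀ i : ℤ, (d (i - 1)).comp (d i) = 0)
    (F : ℤ → ∀ i : ℤ, Submodule R (E i))
    (hdec : ∀ ⦃j j' : ℤ⦄, j ≤ j' → ∀ i, F j' i ≤ F j i)
    (hstab : ∀ j i : ℤ, ∀ x ∈ F j i, d i x ∈ F j (i - 1))
    -- the incoming differential `E (m+1) → E m` (the same `d`, with degrees normalized):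
    (dIn : ∀ m : ℤ, E (m + 1) →ₗ[R] E m)
    (hdIn : ∀ m : ℤ, dIn m =
      ((castE (show m + 1 - 1 = m by ring)).toLinearMap).comp (d (m + 1)))
    -- the associated graded pieces `gr^j E_m = F^j E_m / F^{j+1} E_m`:
    (gr : ∀ _ : ℤ, ∀ _ : ℤ, Type)
    (hgr : ∀ j m : ℤ, gr j m =
      (F j m ⧸ Submodule.comap (F j m).subtype (F (j + 1) m))) :
    -- induced differentials on the graded pieces exist; for any such choice:
    ∀ (grq : ∀ j m : ℤ, F j m →ₗ[R]
        (F j m ⧸ Submodule.comap (F j m).subtype (F (j + 1) m))),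
      (∀ j m, grq j m = (Submodule.comap (F j m).subtype (F (j + 1) m)).mkQ) →
    ∀ (dbarOut : ∀ j m : ℤ,
        (F j m ⧸ Submodule.comap (F j m).subtype (F (j + 1) m)) →ₗ[R]
        (F j (m - 1) ⧸ Submodule.comap (F j (m - 1)).subtype (F (j + 1) (m - 1))))
      (dbarIn : ∀ j m : ℤ,
        (F j (m + 1) ⧸ Submodule.comap (F j (m + 1)).subtype (F (j + 1) (m + 1))) →ₗ[R]
        (F j m ⧸ Submodule.comap (F j m).subtype (F (j + 1) m))),
      -- `dbarOut`/`dbarIn` are induced by `d`/`dIn`: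
      (∀ j m : ℤ, ∀ x : F j m,
        dbarOut j m (grq j m x) = grq j (m - 1) ⟨d m x, hstab j m x x.2⟩) →
      (∀ j m : ℤ, ∀ hIn : ∀ x : F j (m + 1), dIn m x ∈ F j m,
        ∀ x : F j (m + 1), dbarIn j m (grq j (m + 1) x) = grq j m ⟨dIn m x, hIn x⟩) →
    ∀ a j m : ℤ,
      -- (1)  gr^j τ^F_{≥a} E ≅ τ_{≥ a-j} gr^j E :
      (Submodule.map (grq j m)
          (Submodule.comap (F j m).subtype
            (Submodule.comap (d m) (F (a + 1 - m) (m - 1)) ⊓ F (a - m) m)) =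
        if a - j < m then ⊤
        else if m = a - j then LinearMap.ker (dbarOut j m)
        else ⊥) ∧
      -- (2)  gr^j τ^F_{≤a} E ≅ τ_{≤ a-j} gr^j E :
      ((m < a - j → Nonempty
          ((F j m ⧸ Submodule.comap (F j m).subtype
              (F (j + 1) m ⊔ (F (a + 1 - m) m ⊔ Submodule.map (dIn m) (F (a - m) (m + 1)))))
            ≃ₗ[R] (F j m ⧸ Submodule.comap (F j m).subtype (F (j + 1) m)))) ∧
       (m = a - j → Nonempty
          ((F j m ⧸ Submodule.comap (F j m).subtype
              (F (j + 1) m ⊔ (F (a + 1 - m) m ⊔ Submodule.map (dIn m) (F (a - m) (m + 1)))))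
            ≃ₗ[R] ((F j m ⧸ Submodule.comap (F j m).subtype (F (j + 1) m)) ⧸
                LinearMap.range (dbarIn j m)))) ∧
       (a - j < m → Subsingleton
          (F j m ⧸ Submodule.comap (F j m).subtype
            (F (j + 1) m ⊔ (F (a + 1 - m) m ⊔ Submodule.map (dIn m) (F (a - m) (m + 1))))))) := by
  intro grq hgrq dbarOut dbarIn hOut hIn a j m
  have hdInF : ∀ (k : ℤ) (x : E (m+1)), x ∈ F k (m+1) → dIn m x ∈ F k m := by
    intro k x hx
    rw [hdIn]
    exact castE_mem F _ k _ (hstab k (m+1) x hx)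
  constructor
  · by_cases h1 : a - j < m
    · rw [if_pos h1]
      have htop : (Submodule.comap (F j m).subtype
          (Submodule.comap (d m) (F (a + 1 - m) (m - 1)) ⊓ F (a - m) m)) = ⊤ := by
        rw [Submodule.eq_top_iff']
        intro x
        exact ⟨hdec (by omega) (m-1) (hstab j m x x.2), hdec (by omega) m x.2⟩
      rw [htop, Submodule.map_top, hgrq, Submodule.range_mkQ]
    · rw [if_neg h1]
      by_cases h2 : m = a - j
      · rw [if_pos h2]
        apply le_antisymm
        · rintro _ ⟨x, hx, rfl⟩
          have hx1 : d m ↑x ∈ F (j+1) (m-1) := by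
            have := hx.1
            rwa [show a + 1 - m = j + 1 by omega] at this
          rw [LinearMap.mem_ker, hOut, hgrq, Submodule.mkQ_apply,
            Submodule.Quotient.mk_eq_zero]
          exact hx1
        · intro y hy
          obtain ⟨x, rfl⟩ : ∃ x, grq j m x = y := by
            rw [hgrq]; exact Submodule.mkQ_surjective _ y
          rw [LinearMap.mem_ker, hOut, hgrq, Submodule.mkQ_apply,
            Submodule.Quotient.mk_eq_zero] at hy
          refine Submodule.mem_map_of_mem ⟨?_, ?_⟩
          · show d m ↑x ∈ F (a+1-m) (m-1)
            rw [show a + 1 - m = j + 1 by omega]; exact hy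
          · exact hdec (by omega) m x.2
      · rw [if_neg h2, eq_bot_iff]
        rintro _ ⟨x, hx, rfl⟩
        rw [hgrq, Submodule.mem_bot, Submodule.mkQ_apply, Submodule.Quotient.mk_eq_zero]
        exact hdec (by omega) m hx.2
  · refine ⟨?_, ?_, ?_⟩
    · intro h
      have hsub : F (a+1-m) m ⊔ Submodule.map (dIn m) (F (a - m) (m + 1)) ≤ F (j+1) m := by
        apply sup_le (hdec (by omega) m)
        rintro _ ⟨x, hx, rfl⟩
        exact hdec (by omega) m (hdInF _ x hx)
      exact ⟨Submodule.quotEquivOfEq _ _ (by rw [sup_eq_left.mpr hsub])⟩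
    · intro h
      have e2 : a - m = j := by omega
      have hInm : ∀ x : (F j (m+1)), dIn m ↑x ∈ F j m := fun x => hdInF j ↑x x.2
      set S := Submodule.comap (F j m).subtype (F (j+1) m) with hS
      set T := Submodule.comap (F j m).subtype
          (F (j + 1) m ⊔ (F (a + 1 - m) m ⊔ Submodule.map (dIn m) (F (a - m) (m + 1)))) with hT
      have hST : S ≤ T := Submodule.comap_mono le_sup_left
      have hrange : LinearMap.range (dbarIn j m) = Submodule.map S.mkQ T := by
        apply le_antisymm
        · rintro _ ⟨y, rfl⟩
          obtain ⟨x, rfl⟩ : ∃ x, grq j (m+1) x = y := by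
            rw [hgrq]; exact Submodule.mkQ_surjective _ y
          rw [hIn j m hInm x, hgrq]
          refine Submodule.mem_map_of_mem ?_
          rw [hT, Submodule.mem_comap]
          show (dIn m ↑x : E m) ∈ _
          refine Submodule.mem_sup_right (Submodule.mem_sup_right ⟨↑x, ?_, rfl⟩)
          rw [e2]; exact x.2
        · rintro _ ⟨t, ht, rfl⟩
          simp only [hT, SetLike.mem_coe, Submodule.mem_comap, Submodule.subtype_apply] at ht
          rw [show a + 1 - m = j + 1 by omega, ← sup_assoc, sup_idem] at ht
          obtain ⟨u, hu, v, hv, huv⟩ := Submodule.mem_sup.mp ht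
          obtain ⟨x, hx, rfl⟩ := hv
          have hx' : x ∈ F j (m+1) := e2 ▸ hx
          refine ⟨grq j (m+1) ⟨x, hx'⟩, ?_⟩
          rw [hIn j m hInm ⟨x, hx'⟩, hgrq, Submodule.mkQ_apply, Submodule.mkQ_apply,
            Submodule.Quotient.eq]
          show ((⟨dIn m x, hInm ⟨x, hx'⟩⟩ : F j m) - t : F j m).1 ∈ F (j+1) m
          have : ((⟨dIn m x, hInm ⟨x, hx'⟩⟩ : F j m) - t : F j m).1 = dIn m x - ↑t := rfl
          rw [this, ← huv]
          simpa using neg_mem hu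
      rw [hrange]
      exact ⟨(Submodule.quotientQuotientEquivQuotient S T hST).symm⟩
    · intro h
      rw [Submodule.Quotient.subsingleton_iff, Submodule.eq_top_iff']
      intro x
      exact Submodule.mem_sup_right (Submodule.mem_sup_left (hdec (by omega) m x.2))
end

section
/- Let k be a perfect field of characteristic p > 0 and V a complex of k-vector spaces. With C(V) = τ^F_{[0,1]} Č*(Z/pZ, V^{⊗_k p}) as above, there is a functorial sequence 0 → V^{(1)}[1] →^{b} C(V) →^{a} V^{(1)} → 0 that is quasiexact: a∘b = 0, a is surjective, b is injective, and the complex ker(a)/im(b) is acyclic. Here V^{(1)} is the Frobenius twist of V. -/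
set_option linter.unusedSectionVars false
set_option linter.unusedVariables false
set_option maxHeartbeats 1600000
set_option synthInstance.maxHeartbeats 400000


open scoped TensorProduct

/-- `k^{(1)}`: the ring `k` viewed as a module over itself via the absolute Frobenius. -/
def FrobeniusModule (k : Type) (p : ℕ) : Type := k

instance (k : Type) (p : ℕ) [CommRing k] : AddCommGroup (FrobeniusModule k p) :=
  inferInstanceAs (AddCommGroup k)

noncomputable instance (k : Type) (p : ℕ) [CommRing k] [Fact p.Prime] [CharP k p] :
    Module k (FrobeniusModule k p) :=
  Module.compHom k (frobenius k p)

/-- The Frobenius twist `V^{(1)} = V ⊗_k k^{(1)}`. -/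
noncomputable def FrobeniusTwist (k : Type) (p : ℕ) [CommRing k] [Fact p.Prime] [CharP k p]
    (V : Type) [AddCommGroup V] [Module k V] : Type :=
  V ⊗[k] (FrobeniusModule k p)

noncomputable instance (k : Type) (p : ℕ) [CommRing k] [Fact p.Prime] [CharP k p]
    (V : Type) [AddCommGroup V] [Module k V] : AddCommGroup (FrobeniusTwist k p V) :=
  inferInstanceAs (AddCommGroup (V ⊗[k] (FrobeniusModule k p)))

noncomputable instance (k : Type) (p : ℕ) [CommRing k] [Fact p.Prime] [CharP k p]
    (V : Type) [AddCommGroup V] [Module k V] : Module k (FrobeniusTwist k p V) :=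
  inferInstanceAs (Module k (V ⊗[k] (FrobeniusModule k p)))

/-!
STATEMENT 15.  Let `k` be a perfect field of characteristic `p > 0` and `V` a `k`-vector
space (a complex of `k`-vector spaces concentrated in degree `0`).  Let
`C(V) = τ^F_{[0,1]} Č(Z/pZ, V^{⊗_k p})` be the truncated Tate complex: the two-term
complex with degree-`0` term `ker(1-σ)`, degree-`1` term `coker(1-σ)`, and differential
induced by the norm `N`, where `σ` generates the cyclic permutation action on
`T = V^{⊗_k p}`.  Then there is a functorial quasiexact sequence
`0 → V^{(1)}[1] →^b C(V) →^a V^{(1)} → 0`:  `a ∘ b = 0` (automatic for degree reasons),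
`a` is surjective, `b` is injective, both are maps of complexes, and the complex
`ker(a)/im(b)` is acyclic, i.e. the induced map `coker(1-σ)/im(b) → ker(a)` is bijective.
-/
namespace St15

section Abstract


variable {F : Type} (π : Equiv.Perm F)

lemma pow_fix_mul {g : F} {a : ℕ} (ha : (π ^ a) g = g) (q : ℕ) : (π ^ (a * q)) g = g := by
  induction q with
  | zero => simp
  | succ q ih =>
      have : a * (q + 1) = a * q + a := by ring
      rw [this, pow_add, Equiv.Perm.mul_apply, ha, ih]

lemma pow_fix_gcd {g : F} : ∀ {a b : ℕ}, (π ^ a) g = g → (π ^ b) g = g →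
    (π ^ Nat.gcd a b) g = g := by
  intro a
  induction a using Nat.strong_induction_on with
  | _ a ih =>
    intro b ha hb
    rcases Nat.eq_zero_or_pos a with h0 | hpos
    · subst h0; simpa using hb
    · rw [Nat.gcd_rec]
      refine ih (b % a) (Nat.mod_lt _ hpos) ?_ ha
      have hdiv : (π ^ (a * (b / a))) g = g := pow_fix_mul π ha _
      have : (π ^ (a * (b / a) + b % a)) g = g := by
        rwa [Nat.div_add_mod] at *
      rw [pow_add, Equiv.Perm.mul_apply] at this
      exact (Equiv.injective (π ^ (a * (b / a)))) (this.trans hdiv.symm)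

variable {p : ℕ} [hp : Fact p.Prime] (hπ : π ^ p = 1)

include hπ

lemma pow_mod (i : ℕ) : π ^ i = π ^ (i % p) := by
  conv_lhs => rw [← Nat.div_add_mod i p]
  rw [pow_add, pow_mul, hπ, one_pow, one_mul]

lemma orbit_free {g : F} (hg : π g ≠ g) {i : ℕ} (hi : (π ^ i) g = g) : p ∣ i := by
  have hgcd : (π ^ Nat.gcd i p) g = g :=
    pow_fix_gcd π hi (by rw [hπ]; rfl)
  rcases (Nat.Prime.eq_one_or_self_of_dvd hp.out _ (Nat.gcd_dvd_right i p)) with h1 | hP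
  · rw [h1, pow_one] at hgcd; exact absurd hgcd hg
  · have := Nat.gcd_dvd_left i p
    rwa [hP] at this

omit hπ in
lemma fix_pow_iff {g : F} (i : ℕ) : π ((π ^ i) g) = (π ^ i) g ↔ π g = g := by
  have hc : π ((π ^ i) g) = (π ^ i) (π g) := by
    rw [← Equiv.Perm.mul_apply, ← Equiv.Perm.mul_apply, ← pow_succ, ← pow_succ']
  rw [hc]
  exact ⟨fun h => (Equiv.injective (π ^ i)) h, fun h => by rw [h]⟩

lemma orbit_distinct {g : F} (hg : π g ≠ g) {i j : ℕ} (hi : i < p) (hj : j < p)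
    (h : (π ^ i) g = (π ^ j) g) : i = j := by
  rcases le_total i j with hle | hle
  · have : (π ^ (j - i)) ((π ^ i) g) = (π ^ i) g := by
      rw [← Equiv.Perm.mul_apply, ← pow_add, Nat.sub_add_cancel hle, ← h]
    have hfix : π ((π ^ i) g) ≠ (π ^ i) g :=
      fun hh => hg ((fix_pow_iff π i).mp hh)
    have hdvd := orbit_free π hπ hfix this
    have := Nat.eq_zero_of_dvd_of_lt hdvd (by omega)
    omega
  · have : (π ^ (i - j)) ((π ^ j) g) = (π ^ j) g := by
      rw [← Equiv.Perm.mul_apply, ← pow_add, Nat.sub_add_cancel hle, h]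
    have hfix : π ((π ^ j) g) ≠ (π ^ j) g :=
      fun hh => hg ((fix_pow_iff π j).mp hh)
    have hdvd := orbit_free π hπ hfix this
    have := Nat.eq_zero_of_dvd_of_lt hdvd (by omega)
    omega

/-- The orbit equivalence relation of the cyclic group generated by `π`. -/
def orbSetoid (hπ : π ^ p = 1) : Setoid F where
  r a b := ∃ i : ℕ, (π ^ i) a = b
  iseqv := by
    constructor
    · exact fun a => ⟨0, rfl⟩
    · rintro a b ⟨i, rfl⟩
      refine ⟨i * (p - 1), ?_⟩
      rw [← Equiv.Perm.mul_apply, ← pow_add]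
      have hip : i * (p - 1) + i = i * p := by
        have := hp.out.pos; nlinarith [Nat.sub_add_cancel (Nat.one_le_of_lt hp.out.one_lt)]
      rw [hip, mul_comm, pow_mul, hπ, one_pow]; rfl
    · rintro a b c ⟨i, rfl⟩ ⟨j, hj⟩
      exact ⟨i + j, by rw [← hj, ← Equiv.Perm.mul_apply, ← pow_add, add_comm]⟩

/-- A choice of representative in each `π`-orbit. -/
noncomputable def rep (hπ : π ^ p = 1) (f : F) : F :=
  Quotient.out (Quotient.mk (orbSetoid π hπ) f)

lemma rep_rel (f : F) : ∃ i : ℕ, (π ^ i) (rep π hπ f) = f :=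
  Quotient.exact (Quotient.out_eq (Quotient.mk (orbSetoid π hπ) f))

lemma rep_rel' (f : F) : ∃ i : ℕ, i < p ∧ (π ^ i) (rep π hπ f) = f := by
  obtain ⟨i, hi⟩ := rep_rel π hπ f
  exact ⟨i % p, Nat.mod_lt _ hp.out.pos, by rwa [← pow_mod π hπ]⟩

lemma rep_rel_symm (f : F) : ∃ i : ℕ, i < p ∧ (π ^ i) f = rep π hπ f := by
  have h := (orbSetoid π hπ).symm (rep_rel π hπ f)
  obtain ⟨i, hi⟩ := h
  exact ⟨i % p, Nat.mod_lt _ hp.out.pos, by rwa [← pow_mod π hπ]⟩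

lemma rep_pow (i : ℕ) (f : F) : rep π hπ ((π ^ i) f) = rep π hπ f := by
  unfold rep
  congr 1
  exact Quotient.sound ((orbSetoid π hπ).symm ⟨i, rfl⟩)

lemma rep_idem (f : F) : rep π hπ (rep π hπ f) = rep π hπ f := by
  obtain ⟨i, hi⟩ := rep_rel π hπ f
  conv_rhs => rw [← hi]
  rw [rep_pow π hπ, ← hi, rep_pow π hπ]

lemma rep_not_fixed {g : F} (hg : π g ≠ g) : π (rep π hπ g) ≠ rep π hπ g := by
  obtain ⟨i, _, hi⟩ := rep_rel' π hπ g
  intro hfix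
  apply hg
  rw [← hi]
  exact ((fix_pow_iff π i).mpr hfix ▸ (fix_pow_iff π i).mpr hfix)

omit hπ in
lemma fixed_orbit_invariant {g : F} (hg : π g ≠ g) (i : ℕ) : π ((π ^ i) g) ≠ (π ^ i) g :=
  fun hh => hg ((fix_pow_iff π i).mp hh)

omit hπ in
lemma value_orbit_invariant {k : Type} [Field k] {x : F →₀ k}
    (hx : ∀ g, x (π g) = x g) (i : ℕ) (h : F) : x ((π ^ i) h) = x h := by
  induction i with
  | zero => rfl
  | succ i ih => rw [pow_succ', Equiv.Perm.mul_apply, hx, ih]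

lemma exists_norm_decomp {k : Type} [Field k] (x : F →₀ k)
    (hx : ∀ g, x (π g) = x g) :
    ∃ y : F →₀ k, ∀ g, π g ≠ g → (∑ i ∈ Finset.range p, y ((π ^ i) g)) = x g := by
  classical
  have hsupp : ∀ f : F, (fun f => if rep π hπ f = f ∧ π f ≠ f then x f else 0) f ≠ 0 →
      f ∈ x.support := by
    intro f hf
    simp only at hf
    split at hf
    · exact Finsupp.mem_support_iff.mpr hf
    · exact absurd rfl hf
  set y : F →₀ k := Finsupp.onFinset x.support
      (fun f => if rep π hπ f = f ∧ π f ≠ f then x f else 0) hsupp with hydef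
  refine ⟨y, fun g hg => ?_⟩
  have hterm : ∀ i : ℕ, y ((π ^ i) g)
      = if (π ^ i) g = rep π hπ g then x g else 0 := by
    intro i
    rw [Finsupp.onFinset_apply]
    have hcond : (rep π hπ ((π ^ i) g) = (π ^ i) g ∧ π ((π ^ i) g) ≠ (π ^ i) g)
        ↔ ((π ^ i) g = rep π hπ g) := by
      rw [rep_pow]
      exact ⟨fun hh => hh.1.symm, fun hh => ⟨hh.symm, fixed_orbit_invariant π hg i⟩⟩
    rw [if_congr hcond (value_orbit_invariant π hx i g) rfl]
  rw [Finset.sum_congr rfl (fun i _ => hterm i)]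
  obtain ⟨i₀, hi₀p, hi₀⟩ := rep_rel_symm π hπ g
  rw [Finset.sum_eq_single_of_mem i₀ (Finset.mem_range.mpr hi₀p)]
  · rw [if_pos hi₀]
  · intro j hj hne
    rw [if_neg]
    intro hcj
    exact hne (orbit_distinct π hπ hg (Finset.mem_range.mp hj) hi₀p (hcj.trans hi₀.symm))

lemma exists_sub_decomp {k : Type} [Field k] (x : F →₀ k)
    (hx : ∀ g, π g ≠ g → (∑ i ∈ Finset.range p, x ((π ^ i) g)) = 0) :
    ∃ y : F →₀ k, ∀ g, π g ≠ g → x g = y g - y (π g) := by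
  classical
  set idx : F → ℕ := fun f => Nat.find (rep_rel π hπ f) with hidx
  have idx_lt : ∀ f : F, idx f < p := by
    intro f
    obtain ⟨j, hjp, hjw⟩ := rep_rel' π hπ f
    exact lt_of_le_of_lt (Nat.find_min' _ hjw) hjp
  have idx_spec : ∀ f : F, (π ^ idx f) (rep π hπ f) = f :=
    fun f => Nat.find_spec (rep_rel π hπ f)
  set BIG : Finset F := x.support.biUnion
    (fun s => (Finset.range p).image (fun m => (π ^ m) s)) with hBIG
  have hsupp : ∀ f : F,
      (fun f => if π f = f then 0 else
        -(∑ i ∈ Finset.range (idx f), x ((π ^ i) (rep π hπ f)))) f ≠ 0 → f ∈ BIG := by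
    intro f hf
    simp only at hf
    split at hf
    · exact absurd rfl hf
    · rename_i hfix
      have hsum : (∑ i ∈ Finset.range (idx f), x ((π ^ i) (rep π hπ f))) ≠ 0 := by
        intro h0
        rw [h0, neg_zero] at hf
        exact hf rfl
      obtain ⟨i, hi, hxi⟩ := Finset.exists_ne_zero_of_sum_ne_zero hsum
      rw [Finset.mem_range] at hi
      refine Finset.mem_biUnion.mpr ⟨(π ^ i) (rep π hπ f),
        Finsupp.mem_support_iff.mpr hxi, Finset.mem_image.mpr
          ⟨(idx f - i) % p, Finset.mem_range.mpr (Nat.mod_lt _ hp.out.pos), ?_⟩⟩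
      rw [← pow_mod π hπ, ← Equiv.Perm.mul_apply, ← pow_add]
      have : idx f - i + i = idx f := by omega
      rw [this]
      exact Nat.find_spec (rep_rel π hπ f)
  set y : F →₀ k := Finsupp.onFinset BIG
    (fun f => if π f = f then 0 else
      -(∑ i ∈ Finset.range (idx f), x ((π ^ i) (rep π hπ f)))) hsupp with hydef
  have hyval : ∀ f, y f = if π f = f then 0 else
      -(∑ i ∈ Finset.range (idx f), x ((π ^ i) (rep π hπ f))) := fun f => rfl
  refine ⟨y, fun g hg => ?_⟩
  have hπg : π (π g) ≠ π g := by
    have := fixed_orbit_invariant π hg 1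
    rwa [pow_one] at this
  have hrep2 : rep π hπ (π g) = rep π hπ g := by
    have := rep_pow π hπ 1 g
    rwa [pow_one] at this
  have hj : (π ^ idx g) (rep π hπ g) = g := idx_spec g
  have hjp : idx g < p := idx_lt g
  have hrnf : π (rep π hπ g) ≠ rep π hπ g := rep_not_fixed π hπ hg
  rw [hyval g, hyval (π g), if_neg hg, if_neg hπg]
  rcases Nat.lt_or_ge (idx g + 1) p with hcase | hcase
  · -- idx (π g) = idx g + 1
    have hwit : (π ^ (idx g + 1)) (rep π hπ (π g)) = π g := by
      rw [hrep2, pow_succ', Equiv.Perm.mul_apply, hj]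
    have hidxlt : idx (π g) < p := idx_lt (π g)
    have hspec : (π ^ idx (π g)) (rep π hπ g) = π g := by
      rw [← hrep2]
      exact idx_spec (π g)
    have hwit' : (π ^ (idx g + 1)) (rep π hπ g) = π g := by
      rw [pow_succ', Equiv.Perm.mul_apply, hj]
    have heq : idx (π g) = idx g + 1 :=
      orbit_distinct π hπ hrnf hidxlt hcase (hspec.trans hwit'.symm)
    rw [heq, hrep2, Finset.sum_range_succ, hj]
    ring
  · -- idx g + 1 = p, so π g = rep g
    have hp1 : idx g + 1 = p := by omega
    have hπgrep : π g = rep π hπ g := by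
      have : (π ^ (idx g + 1)) (rep π hπ g) = π g := by
        rw [pow_succ', Equiv.Perm.mul_apply, hj]
      rw [hp1, hπ] at this
      exact this.symm
    have h0 : (π ^ 0) (rep π hπ (π g)) = π g := by
      rw [pow_zero, hrep2, hπgrep]
      rfl
    have hidx0 : idx (π g) = 0 := by
      simp only [hidx]
      exact (Nat.find_eq_zero _).mpr h0
    rw [hidx0]
    simp only [Finset.range_zero, Finset.sum_empty, neg_zero, sub_zero]
    have horb : (∑ i ∈ Finset.range p, x ((π ^ i) (rep π hπ g))) = 0 := hx _ hrnf
    have hr : Finset.range p = Finset.range (idx g + 1) := by rw [hp1]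
    rw [hr, Finset.sum_range_succ, hj] at horb
    linear_combination horb

end Abstract

section Tuple


open scoped TensorProduct
open Fin.NatCast Fin.CommRing

lemma finRotate_pow_apply {n : ℕ} (q : ℕ) (i : Fin (n+1)) :
    ((finRotate (n+1)) ^ q) i = i + (q : Fin (n+1)) := by
  induction q generalizing i with
  | zero => simp
  | succ q ih =>
      rw [pow_succ, Equiv.Perm.mul_apply, finRotate_succ_apply, ih]
      push_cast
      ring

lemma finRotate_pow_self (n : ℕ) : (finRotate n) ^ n = 1 := by
  cases n with
  | zero =>
      ext i
      exact i.elim0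
  | succ m =>
      ext i
      rw [finRotate_pow_apply]
      simp [Fin.natCast_self]

lemma eq_const_of_comp_finRotate {α : Type*} {n : ℕ} {f : Fin (n+1) → α}
    (h : ∀ j, f (finRotate (n+1) j) = f j) (j : Fin (n+1)) : f j = f 0 := by
  have key : ∀ q : ℕ, f (q : Fin (n+1)) = f 0 := by
    intro q
    induction q with
    | zero => norm_num
    | succ q ih =>
        have hc : ((q+1 : ℕ) : Fin (n+1)) = finRotate (n+1) ((q : ℕ) : Fin (n+1)) := by
          rw [finRotate_succ_apply]
          push_cast
          ring
        rw [hc, h, ih]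
  have := key j.val
  rwa [Fin.cast_val_eq_self] at this

/-- The permutation of `p`-tuples induced by `finRotate`. -/
def rotPerm (p : ℕ) (ι : Type*) : Equiv.Perm (Fin p → ι) where
  toFun f := f ∘ (finRotate p).symm
  invFun f := f ∘ (finRotate p)
  left_inv f := by funext i; exact congrArg f ((finRotate p).symm_apply_apply i)
  right_inv f := by funext i; exact congrArg f ((finRotate p).apply_symm_apply i)

lemma rotPerm_symm_apply {p : ℕ} {ι : Type*} (f : Fin p → ι) :
    (rotPerm p ι).symm f = f ∘ (finRotate p) := rfl

lemma rotPerm_symm_pow_apply {p : ℕ} {ι : Type*} (q : ℕ) (f : Fin p → ι) :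
    (((rotPerm p ι).symm) ^ q) f = f ∘ ((finRotate p) ^ q) := by
  induction q generalizing f with
  | zero => funext x; simp
  | succ q ih =>
      funext x
      rw [pow_succ, Equiv.Perm.mul_apply, ih]
      show f (finRotate p ((finRotate p ^ q) x)) = f ((finRotate p ^ (q+1)) x)
      rw [pow_succ']
      rfl

lemma rotPerm_symm_pow_p {p : ℕ} {ι : Type*} : ((rotPerm p ι).symm) ^ p = 1 := by
  ext f
  rw [rotPerm_symm_pow_apply, finRotate_pow_self]
  rfl

lemma rotPerm_symm_fixed_iff {n : ℕ} {ι : Type*} (f : Fin (n+1) → ι) :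
    (rotPerm (n+1) ι).symm f = f ↔ f = fun _ => f 0 := by
  constructor
  · intro hfix
    funext j
    exact eq_const_of_comp_finRotate (fun j => congrFun hfix j) j
  · intro hconst
    funext j
    rw [rotPerm_symm_apply]
    simp only [Function.comp_apply]
    conv_lhs => rw [hconst]
    conv_rhs => rw [hconst]

section TB

variable {k V ι : Type} [CommRing k] [AddCommGroup V] [Module k V]

open PiTensorProduct

/-- One-step equivalence for building the tensor power basis. -/
noncomputable def stepEquiv (k V : Type) [CommRing k] [AddCommGroup V] [Module k V] (n : ℕ) :
    ((⨂[k] (_ : Fin n), V) ⊗[k] V) ≃ₗ[k] ⨂[k] (_ : Fin (n+1)), V :=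
  (TensorProduct.congr (LinearEquiv.refl k _)
      ((PiTensorProduct.subsingletonEquiv (0 : Fin 1) :
        (⨂[k] (_ : Fin 1), V) ≃ₗ[k] V).symm)).trans
    ((PiTensorProduct.tmulEquiv k V).trans
      (PiTensorProduct.reindex k (fun _ => V) finSumFinEquiv))

/-- A basis of the `n`-th tensor power indexed by tuples of basis indices. -/
noncomputable def tensorBasis (eV : Module.Basis ι k V) :
    ∀ n : ℕ, Module.Basis (Fin n → ι) k (⨂[k] (_ : Fin n), V)
  | 0 => (Module.Basis.singleton (Fin 0 → ι) k).map (PiTensorProduct.isEmptyEquiv (Fin 0)).symm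
  | (n+1) => (((tensorBasis eV n).tensorProduct eV).map (stepEquiv k V n)).reindex
      ((Equiv.prodComm _ _).trans
        ((Fin.snocEquiv (fun _ => ι)).trans (Equiv.refl _)))

lemma tensorBasis_apply (eV : Module.Basis ι k V) (n : ℕ) (f : Fin n → ι) :
    tensorBasis eV n f = PiTensorProduct.tprod k (fun i => eV (f i)) := by
  induction n with
  | zero =>
      rw [tensorBasis, Module.Basis.map_apply, Module.Basis.singleton_apply,
        PiTensorProduct.isEmptyEquiv_symm_apply, one_smul]
      congr
      funext i
      exact i.elim0
  | succ n ih =>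
      rw [tensorBasis, Module.Basis.reindex_apply, Module.Basis.map_apply]
      have hsymm : ((Equiv.prodComm (Fin n → ι) ι).trans
          ((Fin.snocEquiv (fun _ => ι)).trans (Equiv.refl _))).symm f
          = (Fin.init f, f (Fin.last n)) := rfl
      rw [hsymm, Module.Basis.tensorProduct_apply, ih]
      rw [stepEquiv]
      simp only [LinearEquiv.trans_apply, TensorProduct.congr_tmul, LinearEquiv.refl_apply,
        PiTensorProduct.subsingletonEquiv_symm_apply]
      rw [PiTensorProduct.tmulEquiv_apply, PiTensorProduct.reindex_tprod]
      congr
      funext i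
      refine Fin.lastCases ?_ (fun j => ?_) i
      · have hlast : finSumFinEquiv.symm (Fin.last n) = Sum.inr (0 : Fin 1) := by
          have h : (Fin.last n) = Fin.natAdd n (0 : Fin 1) := by ext; simp
          rw [h, finSumFinEquiv_symm_apply_natAdd]
        rw [hlast]
        rfl
      · have hcast : finSumFinEquiv.symm (Fin.castSucc j) = Sum.inl j := by
          have h : (Fin.castSucc j) = Fin.castAdd 1 j := rfl
          rw [h, finSumFinEquiv_symm_apply_castAdd]
        rw [hcast]
        rfl

end TB


end Tuple

section Frob


variable (k : Type) (p : ℕ) [Field k] [Fact p.Prime] [CharP k p] [ExpChar k p] [PerfectRing k p]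
variable (V : Type) [AddCommGroup V] [Module k V]

/-- Identity coercion `k → k^{(1)}`. -/
def toFM : k → FrobeniusModule k p := id
/-- Identity coercion `k^{(1)} → k`. -/
def ofFM : FrobeniusModule k p → k := id

lemma frobMod_smul_def (c : k) (x : FrobeniusModule k p) :
    c • x = toFM k p (frobenius k p c * ofFM k p x) := rfl

/-- The bilinear map used to invert `v ↦ v ⊗ 1`. -/
noncomputable def gBil : V →ₗ[k] FrobeniusModule k p →ₗ[k] V where
  toFun v :=
    { toFun := fun x => ((frobeniusEquiv k p).symm (ofFM k p x)) • v
      map_add' := fun x y => by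
        show ((frobeniusEquiv k p).symm (ofFM k p x + ofFM k p y)) • v = _
        rw [map_add, add_smul]
      map_smul' := fun c x => by
        show ((frobeniusEquiv k p).symm (frobenius k p c * ofFM k p x)) • v
          = c • (((frobeniusEquiv k p).symm (ofFM k p x)) • v)
        rw [map_mul, smul_smul]
        congr 2
        exact (frobeniusEquiv k p).symm_apply_apply c }
  map_add' v w := by
    ext x
    exact smul_add _ v w
  map_smul' c v := by
    ext x
    exact smul_comm _ c v

/-- `V ≃ V^{(1)}`, `v ↦ v ⊗ 1`; linear because the twisted factor carries the
Frobenius-twisted action.  Uses perfectness. -/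
noncomputable def jEquiv : V ≃ₗ[k] FrobeniusTwist k p V := by
  refine LinearEquiv.ofLinear
    { toFun := fun v => (v ⊗ₜ (toFM k p 1) : V ⊗[k] FrobeniusModule k p)
      map_add' := fun v w => TensorProduct.add_tmul v w (toFM k p 1)
      map_smul' := fun c v => by
        simp only [RingHom.id_apply]
        exact (TensorProduct.smul_tmul' c v (toFM k p 1)).symm }
    (TensorProduct.lift (gBil k p V)) ?_ ?_
  · apply TensorProduct.ext'
    intro v x
    show (TensorProduct.lift (gBil k p V) (v ⊗ₜ[k] x)) ⊗ₜ[k] (toFM k p 1) = v ⊗ₜ[k] x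
    rw [TensorProduct.lift.tmul]
    show (((frobeniusEquiv k p).symm (ofFM k p x)) • v) ⊗ₜ[k] (toFM k p 1) = v ⊗ₜ[k] x
    rw [TensorProduct.smul_tmul]
    congr 1
    show toFM k p (frobenius k p ((frobeniusEquiv k p).symm (ofFM k p x)) * ofFM k p (toFM k p 1)) = x
    have h1 : ofFM k p (toFM k p 1) = 1 := rfl
    rw [h1, mul_one]
    show toFM k p (frobenius k p ((frobeniusEquiv k p).symm (ofFM k p x))) = x
    have := (frobeniusEquiv k p).apply_symm_apply (ofFM k p x)
    rw [frobeniusEquiv_apply] at this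
    rw [this]
    rfl
  · apply LinearMap.ext
    intro v
    simp only [LinearMap.coe_comp, Function.comp_apply, LinearMap.coe_mk, AddHom.coe_mk,
      TensorProduct.lift.tmul, LinearMap.id_coe, id_eq]
    show ((frobeniusEquiv k p).symm (ofFM k p (toFM k p 1))) • v = v
    have h1 : ofFM k p (toFM k p 1) = 1 := rfl
    rw [h1, map_one, one_smul]

@[simp] lemma jEquiv_apply (v : V) :
    jEquiv k p V v = (v ⊗ₜ (toFM k p 1) : V ⊗[k] FrobeniusModule k p) := rfl


end Frob

end St15


theorem statement15
    (k : Type) [Field k] (p : ℕ) [Fact p.Prime] [CharP k p] [ExpChar k p] [PerfectRing k p]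
    (V : Type) [AddCommGroup V] [Module k V]
    (σ : Module.End k (⨂[k] (_ : Fin p), V))
    (hσ : σ = (PiTensorProduct.reindex k (fun _ : Fin p => V) (finRotate p)).toLinearMap)
    (N : Module.End k (⨂[k] (_ : Fin p), V)) (hN : N = ∑ i ∈ Finset.range p, σ ^ i)
    -- the differential of the two-term complex `C(V)`, induced by the norm `N`:
    (dV : ((⨂[k] (_ : Fin p), V) ⧸ LinearMap.range (1 - σ)) →ₗ[k] LinearMap.ker (1 - σ))
    (hdV : ∀ y : ⨂[k] (_ : Fin p), V,
      ((dV (Submodule.Quotient.mk y) : LinearMap.ker (1 - σ)) : ⨂[k] (_ : Fin p), V)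
        = N y) :
    ∃ (a : (LinearMap.ker (1 - σ)) →ₗ[k] FrobeniusTwist k p V)
      (b : FrobeniusTwist k p V →ₗ[k]
        ((⨂[k] (_ : Fin p), V) ⧸ LinearMap.range (1 - σ))),
      -- `a` and `b` are maps of complexes:
      (a ∘ₗ dV = 0) ∧ (dV ∘ₗ b = 0) ∧
      -- quasiexactness:
      Function.Surjective a ∧ Function.Injective b ∧
      (∀ dbar : (((⨂[k] (_ : Fin p), V) ⧸ LinearMap.range (1 - σ)) ⧸
          LinearMap.range b) →ₗ[k] LinearMap.ker a,
        (∀ y : ((⨂[k] (_ : Fin p), V) ⧸ LinearMap.range (1 - σ)),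
          ((dbar (Submodule.Quotient.mk y) : LinearMap.ker a) : LinearMap.ker (1 - σ))
            = dV y) →
        Function.Bijective dbar) := by
  classical
  obtain ⟨m, rfl⟩ : ∃ m, p = m + 1 :=
    ⟨p - 1, by have := (Fact.out (p := p.Prime)).pos; omega⟩
  obtain ⟨ι, ⟨eV⟩⟩ : ∃ ι : Type, Nonempty (Module.Basis ι k V) :=
    ⟨_, ⟨Module.Basis.ofVectorSpace k V⟩⟩
  set bT : Module.Basis (Fin (m+1) → ι) k (⨂[k] (_ : Fin (m+1)), V) :=
    St15.tensorBasis eV (m+1) with hbT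
  set π : Equiv.Perm (Fin (m+1) → ι) := (St15.rotPerm (m+1) ι).symm with hπdef
  have hπ1 : π ^ (m+1) = 1 := St15.rotPerm_symm_pow_p
  set cst : ι → (Fin (m+1) → ι) := fun i _ => i with hcstdef
  have hcst_inj : Function.Injective cst := fun i j h => congrFun h 0
  have hfixc : ∀ f, π f = f ↔ ∃ i, f = cst i := by
    intro f
    rw [hπdef, St15.rotPerm_symm_fixed_iff]
    constructor
    · intro h; exact ⟨f 0, h⟩
    · rintro ⟨i, rfl⟩; rfl
  have hπcst : ∀ (i₀ : ι) (q : ℕ), (π ^ q) (cst i₀) = cst i₀ := by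
    intro i₀ q
    induction q with
    | zero => rfl
    | succ q ih =>
        have hfix0 : π (cst i₀) = cst i₀ := (hfixc _).mpr ⟨i₀, rfl⟩
        rw [pow_succ, Equiv.Perm.mul_apply, hfix0, ih]
  -- σ on basis vectors
  have hσb : ∀ g, σ (bT g) = bT (π.symm g) := by
    intro g
    have h1 : bT g = PiTensorProduct.tprod k (fun i => eV (g i)) :=
      St15.tensorBasis_apply eV (m+1) g
    have h2 : bT (π.symm g) = PiTensorProduct.tprod k (fun i => eV ((π.symm g) i)) :=
      St15.tensorBasis_apply eV (m+1) _
    rw [hσ, h1, h2]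
    exact PiTensorProduct.reindex_tprod _ _
  -- coordinates of σ x
  have hσcoord : ∀ (x : ⨂[k] (_ : Fin (m+1)), V) (f : Fin (m+1) → ι),
      bT.repr (σ x) f = bT.repr x (π f) := by
    intro x f
    have hAB : ((Finsupp.lapply f : ((Fin (m+1) → ι) →₀ k) →ₗ[k] k).comp
          (bT.repr.toLinearMap.comp σ))
        = ((Finsupp.lapply (π f) : ((Fin (m+1) → ι) →₀ k) →ₗ[k] k).comp
            bT.repr.toLinearMap) := by
      apply Module.Basis.ext bT
      intro g
      simp only [LinearMap.comp_apply, LinearEquiv.coe_coe, Finsupp.lapply_apply]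
      rw [hσb g, Module.Basis.repr_self, Module.Basis.repr_self, Finsupp.single_apply,
        Finsupp.single_apply]
      simp only [Equiv.symm_apply_eq]
    exact LinearMap.congr_fun hAB x
  have hσpow : ∀ (q : ℕ) (x : ⨂[k] (_ : Fin (m+1)), V) (f : Fin (m+1) → ι),
      bT.repr ((σ ^ q) x) f = bT.repr x ((π ^ q) f) := by
    intro q
    induction q with
    | zero => intro x f; simp
    | succ q ih =>
        intro x f
        rw [pow_succ, Module.End.mul_apply, ih, hσcoord, pow_succ',
          Equiv.Perm.mul_apply]
  have hNcoord : ∀ (x : ⨂[k] (_ : Fin (m+1)), V) (f : Fin (m+1) → ι),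
      bT.repr (N x) f = ∑ i ∈ Finset.range (m+1), bT.repr x ((π ^ i) f) := by
    intro x f
    rw [hN, LinearMap.sum_apply, map_sum, Finsupp.coe_finset_sum, Finset.sum_apply]
    exact Finset.sum_congr rfl (fun i _ => hσpow i x f)
  have h1mcoord : ∀ (x : ⨂[k] (_ : Fin (m+1)), V) (f : Fin (m+1) → ι),
      bT.repr ((1 - σ) x) f = bT.repr x f - bT.repr x (π f) := by
    intro x f
    rw [LinearMap.sub_apply, Module.End.one_apply, map_sub, Finsupp.sub_apply, hσcoord]
  have hcharp : ∀ c : k, (m + 1 : ℕ) • c = 0 := by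
    intro c
    rw [nsmul_eq_mul, CharP.cast_eq_zero k (m+1), zero_mul]
  have hNfix : ∀ (x : ⨂[k] (_ : Fin (m+1)), V) (i₀ : ι),
      bT.repr (N x) (cst i₀) = 0 := by
    intro x i₀
    rw [hNcoord]
    rw [Finset.sum_congr rfl (fun i _ => by rw [hπcst i₀ i])]
    rw [Finset.sum_const, Finset.card_range, hcharp]
  -- kernel membership characterization
  have hker : ∀ x : ⨂[k] (_ : Fin (m+1)), V,
      x ∈ LinearMap.ker (1 - σ) ↔ ∀ f, bT.repr x f = bT.repr x (π f) := by
    intro x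
    rw [LinearMap.mem_ker]
    constructor
    · intro h f
      have h2 := h1mcoord x f
      rw [h] at h2
      have h3 : (0 : ((Fin (m+1) → ι) →₀ k)) f = 0 := rfl
      rw [map_zero] at h2
      rw [h3] at h2
      exact sub_eq_zero.mp h2.symm
    · intro h
      have : bT.repr ((1 - σ) x) = 0 := by
        ext f
        rw [h1mcoord, h f, sub_self]
        rfl
      exact (LinearEquiv.map_eq_zero_iff bT.repr).mp this
  -- the projection L
  set L : (⨂[k] (_ : Fin (m+1)), V) →ₗ[k] V :=
    (eV.repr.symm.toLinearMap).comp
      ((Finsupp.lcomapDomain cst hcst_inj : ((Fin (m+1) → ι) →₀ k) →ₗ[k] (ι →₀ k)).comp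
        bT.repr.toLinearMap) with hLdef
  have hLcoord : ∀ x, eV.repr (L x) = Finsupp.comapDomain cst (bT.repr x)
      (hcst_inj.injOn) := by
    intro x
    rw [hLdef]
    simp only [LinearMap.comp_apply, LinearEquiv.coe_coe, LinearEquiv.coe_toLinearMap]
    rw [LinearEquiv.apply_symm_apply]
    rfl
  have hL0 : ∀ x, L x = 0 ↔ ∀ i, bT.repr x (cst i) = 0 := by
    intro x
    constructor
    · intro h i
      have hc := hLcoord x
      rw [h, map_zero] at hc
      have hc2 := DFunLike.congr_fun hc.symm i
      rwa [Finsupp.comapDomain_apply, Finsupp.coe_zero, Pi.zero_apply] at hc2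
    · intro h
      have : eV.repr (L x) = 0 := by
        rw [hLcoord]
        ext i
        simp [Finsupp.comapDomain_apply, h i]
      exact (LinearEquiv.map_eq_zero_iff eV.repr).mp this
  have hLb : ∀ i, L (bT (cst i)) = eV i := by
    intro i
    have : eV.repr (L (bT (cst i))) = Finsupp.single i 1 := by
      rw [hLcoord]
      ext j
      rw [Finsupp.comapDomain_apply, Module.Basis.repr_self, Finsupp.single_apply,
        Finsupp.single_apply]
      simp [hcst_inj.eq_iff]
    have h2 := congrArg eV.repr.symm this
    rw [LinearEquiv.symm_apply_apply] at h2
    rw [h2, Module.Basis.repr_symm_single_one]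
  -- the inclusion b0
  set b0 : V →ₗ[k] (⨂[k] (_ : Fin (m+1)), V) :=
    Module.Basis.constr eV k (fun i => bT (cst i)) with hb0def
  have hb0b : ∀ i, b0 (eV i) = bT (cst i) := by
    intro i
    rw [hb0def]
    exact Module.Basis.constr_basis eV k _ i
  have hb0coord_c : ∀ (v : V) (i : ι), bT.repr (b0 v) (cst i) = eV.repr v i := by
    intro v i
    have hAB : ((Finsupp.lapply (cst i) : ((Fin (m+1) → ι) →₀ k) →ₗ[k] k).comp
          (bT.repr.toLinearMap.comp b0))
        = ((Finsupp.lapply i : (ι →₀ k) →ₗ[k] k).comp eV.repr.toLinearMap) := by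
      apply Module.Basis.ext eV
      intro j
      simp only [LinearMap.comp_apply, LinearEquiv.coe_coe, Finsupp.lapply_apply]
      rw [hb0b j, Module.Basis.repr_self, Module.Basis.repr_self, Finsupp.single_apply,
        Finsupp.single_apply]
      simp [hcst_inj.eq_iff]
    exact LinearMap.congr_fun hAB v
  have hb0coord_n : ∀ (v : V) (f : Fin (m+1) → ι), (¬ ∃ i, f = cst i) →
      bT.repr (b0 v) f = 0 := by
    intro v f hf
    have hAB : ((Finsupp.lapply f : ((Fin (m+1) → ι) →₀ k) →ₗ[k] k).comp
          (bT.repr.toLinearMap.comp b0)) = 0 := by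
      apply Module.Basis.ext eV
      intro j
      simp only [LinearMap.comp_apply, LinearEquiv.coe_coe, Finsupp.lapply_apply,
        LinearMap.zero_apply]
      rw [hb0b j, Module.Basis.repr_self, Finsupp.single_apply, if_neg]
      intro h
      exact hf ⟨j, h.symm⟩
    exact LinearMap.congr_fun hAB v
  have hLb0 : ∀ v, L (b0 v) = v := by
    intro v
    have hAB : L.comp b0 = LinearMap.id := by
      apply Module.Basis.ext eV
      intro i
      simp only [LinearMap.comp_apply, LinearMap.id_apply]
      rw [hb0b i, hLb i]
    exact LinearMap.congr_fun hAB v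
  have hb0ker : ∀ v, b0 v ∈ LinearMap.ker (1 - σ) := by
    intro v
    rw [hker]
    intro f
    by_cases hf : ∃ i, f = cst i
    · rw [(hfixc f).mpr hf]
    · have hπf : π f ≠ f := fun h => hf ((hfixc f).mp h)
      have hnf : π (π f) ≠ π f := by
        have := St15.fixed_orbit_invariant π hπf 1
        rwa [pow_one] at this
      have hf2 : ¬ ∃ i, π f = cst i := fun hh => hnf ((hfixc (π f)).mpr hh)
      rw [hb0coord_n v f hf, hb0coord_n v (π f) hf2]
  -- N kills b0
  have hNb0 : ∀ v, N (b0 v) = 0 := by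
    intro v
    have hrepr : bT.repr (N (b0 v)) = 0 := by
      ext f
      by_cases hf : ∃ i, f = cst i
      · obtain ⟨i₀, rfl⟩ := hf
        rw [hNfix (b0 v) i₀]
        rfl
      · rw [hNcoord]
        have hπf : π f ≠ f := fun h => hf ((hfixc f).mp h)
        rw [Finset.sum_congr rfl (fun i _ => hb0coord_n v ((π ^ i) f)
          (fun hh => (St15.fixed_orbit_invariant π hπf i) ((hfixc _).mpr hh)))]
        simp
    exact (LinearEquiv.map_eq_zero_iff bT.repr).mp hrepr
  -- the two maps
  set a : (LinearMap.ker (1 - σ)) →ₗ[k] FrobeniusTwist k (m+1) V :=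
    (St15.jEquiv k (m+1) V).toLinearMap.comp
      (L.comp (Submodule.subtype (LinearMap.ker (1 - σ)))) with hadef
  set b : FrobeniusTwist k (m+1) V →ₗ[k]
      ((⨂[k] (_ : Fin (m+1)), V) ⧸ LinearMap.range (1 - σ)) :=
    (Submodule.mkQ (LinearMap.range (1 - σ))).comp
      (b0.comp (St15.jEquiv k (m+1) V).symm.toLinearMap) with hbdef
  have haval : ∀ z : LinearMap.ker (1 - σ),
      a z = St15.jEquiv k (m+1) V (L (z : ⨂[k] (_ : Fin (m+1)), V)) := fun z => rfl
  have hbval : ∀ t, b t = Submodule.Quotient.mk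
      (b0 ((St15.jEquiv k (m+1) V).symm t)) := fun t => rfl
  refine ⟨a, b, ?_, ?_, ?_, ?_, ?_⟩
  · -- a ∘ dV = 0
    apply LinearMap.ext
    intro t
    obtain ⟨y, rfl⟩ := Submodule.Quotient.mk_surjective _ t
    rw [LinearMap.comp_apply, LinearMap.zero_apply, haval, hdV y]
    have : L (N y) = 0 := (hL0 (N y)).mpr (fun i => hNfix y i)
    rw [this, map_zero]
  · -- dV ∘ b = 0
    apply LinearMap.ext
    intro t
    rw [LinearMap.comp_apply, LinearMap.zero_apply, hbval]
    have hcoe : ((dV (Submodule.Quotient.mk (b0 ((St15.jEquiv k (m+1) V).symm t))) :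
        LinearMap.ker (1 - σ)) : ⨂[k] (_ : Fin (m+1)), V) = 0 := by
      rw [hdV, hNb0]
    exact Subtype.ext hcoe
  · -- a surjective
    intro t
    refine ⟨⟨b0 ((St15.jEquiv k (m+1) V).symm t), hb0ker _⟩, ?_⟩
    rw [haval]
    show St15.jEquiv k (m+1) V (L (b0 ((St15.jEquiv k (m+1) V).symm t))) = t
    rw [hLb0, LinearEquiv.apply_symm_apply]
  · -- b injective
    rw [← LinearMap.ker_eq_bot, LinearMap.ker_eq_bot']
    intro t ht
    rw [hbval, Submodule.Quotient.mk_eq_zero] at ht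
    obtain ⟨u, hu⟩ := ht
    have hvz : (St15.jEquiv k (m+1) V).symm t = 0 := by
      have hcoords : ∀ i, eV.repr ((St15.jEquiv k (m+1) V).symm t) i = 0 := by
        intro i
        have h1 := hb0coord_c ((St15.jEquiv k (m+1) V).symm t) i
        have h2 : bT.repr ((1 - σ) u) (cst i) = 0 := by
          rw [h1mcoord, (hfixc (cst i)).mpr ⟨i, rfl⟩, sub_self]
        rw [← hu, h2] at h1
        exact h1.symm
      have hz : eV.repr ((St15.jEquiv k (m+1) V).symm t) = 0 := by
        ext i
        rw [hcoords i]
        rfl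
      exact (LinearEquiv.map_eq_zero_iff eV.repr).mp hz
    have := congrArg (St15.jEquiv k (m+1) V) hvz
    rwa [LinearEquiv.apply_symm_apply, map_zero] at this
  · -- quasiexactness
    intro dbar hdbar
    constructor
    · -- injective
      refine (injective_iff_map_eq_zero dbar).mpr ?_
      intro t ht
      obtain ⟨t', rfl⟩ := Submodule.Quotient.mk_surjective _ t
      obtain ⟨y, rfl⟩ := Submodule.Quotient.mk_surjective _ t'
      rw [Submodule.Quotient.mk_eq_zero]
      have hNy : N y = 0 := by
        have h1 := hdbar (Submodule.Quotient.mk y)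
        rw [ht] at h1
        have h2 : ((dV (Submodule.Quotient.mk y) : LinearMap.ker (1 - σ)) :
            ⨂[k] (_ : Fin (m+1)), V) = 0 := by
          rw [← h1]
          rfl
        rwa [hdV] at h2
      have hsums : ∀ g, π g ≠ g →
          (∑ i ∈ Finset.range (m+1), (bT.repr y) ((π ^ i) g)) = 0 := by
        intro g _
        have h3 := hNcoord y g
        rw [hNy, map_zero] at h3
        rw [← h3]
        rfl
      obtain ⟨yf, hyf⟩ := St15.exists_sub_decomp π hπ1 (bT.repr y) hsums
      set u := bT.repr.symm yf with hudef
      set t0 := y - (1 - σ) u with ht0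
      have ht0coord : ∀ f, ¬ (∃ i, f = cst i) → bT.repr t0 f = 0 := by
        intro f hf
        have hπf : π f ≠ f := fun h => hf ((hfixc f).mp h)
        rw [ht0, map_sub, Finsupp.sub_apply, h1mcoord]
        have hru : bT.repr u = yf := by rw [hudef]; exact bT.repr.apply_symm_apply yf
        rw [hru, hyf f hπf]
        ring
      set v0 := eV.repr.symm (Finsupp.comapDomain cst (bT.repr t0) hcst_inj.injOn)
        with hv0
      have hb0v0 : b0 v0 = t0 := by
        have hrr : bT.repr (b0 v0) = bT.repr t0 := by
          ext f
          by_cases hf : ∃ i, f = cst i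
          · obtain ⟨i, rfl⟩ := hf
            rw [hb0coord_c v0 i, hv0, LinearEquiv.apply_symm_apply,
              Finsupp.comapDomain_apply]
          · rw [hb0coord_n v0 f hf, ht0coord f hf]
        exact bT.repr.injective hrr
      refine ⟨St15.jEquiv k (m+1) V v0, ?_⟩
      rw [hbval, LinearEquiv.symm_apply_apply, hb0v0, ht0]
      have hz : Submodule.Quotient.mk (p := LinearMap.range (1 - σ)) ((1 - σ) u) = 0 :=
        (Submodule.Quotient.mk_eq_zero _).mpr ⟨u, rfl⟩
      rw [Submodule.Quotient.mk_sub, hz, sub_zero]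
    · -- surjective
      intro z
      have hLz : L ((z : LinearMap.ker (1 - σ)) : ⨂[k] (_ : Fin (m+1)), V) = 0 := by
        have hz2 := z.2
        rw [LinearMap.mem_ker, haval] at hz2
        exact (St15.jEquiv k (m+1) V).injective (by rwa [map_zero])
      have hcfix : ∀ i, bT.repr ((z : LinearMap.ker (1 - σ)) :
          ⨂[k] (_ : Fin (m+1)), V) (cst i) = 0 := (hL0 _).mp hLz
      have hinv : ∀ g, (bT.repr ((z : LinearMap.ker (1 - σ)) :
          ⨂[k] (_ : Fin (m+1)), V)) (π g) = (bT.repr ((z : LinearMap.ker (1 - σ)) :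
          ⨂[k] (_ : Fin (m+1)), V)) g := by
        intro g
        exact ((hker _).mp (z : LinearMap.ker (1 - σ)).2 g).symm
      obtain ⟨yf, hyf⟩ := St15.exists_norm_decomp π hπ1 _ hinv
      set u := bT.repr.symm yf with hudef
      have hNu : N u = ((z : LinearMap.ker (1 - σ)) : ⨂[k] (_ : Fin (m+1)), V) := by
        have hrr : bT.repr (N u) = bT.repr ((z : LinearMap.ker (1 - σ)) :
            ⨂[k] (_ : Fin (m+1)), V) := by
          ext f
          rw [hNcoord]
          have hru : bT.repr u = yf := by rw [hudef]; exact bT.repr.apply_symm_apply yf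
          by_cases hf : ∃ i, f = cst i
          · obtain ⟨i₀, rfl⟩ := hf
            rw [Finset.sum_congr rfl (fun i _ => by rw [hπcst i₀ i]), hru,
              Finset.sum_const, Finset.card_range]
            rw [hcfix i₀, hcharp]
          · have hπf : π f ≠ f := fun h => hf ((hfixc f).mp h)
            rw [Finset.sum_congr rfl (fun i _ => by rw [hru])]
            exact hyf f hπf
        exact bT.repr.injective hrr
      refine ⟨Submodule.Quotient.mk (Submodule.Quotient.mk u), ?_⟩
      apply Subtype.ext
      rw [hdbar (Submodule.Quotient.mk u)]
      apply Subtype.ext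
      rw [hdV]
      exact hNu
end

section
/- Let K_•([n]) denote the standard cellular chain complex of the circle S¹ with respect to the cellular decomposition with n vertices and n edges. Then the assignment [n] ↦ K_•([n]) is functorial in the cyclic category Λ, and there is an exact sequence 0 → Z → K₁ → K₀ → Z → 0 in the category of functors Fun(Λ, Z), where the outer terms are the constant functor Z, the map K₁ → K₀ is the cellular boundary, Z → K₁ is the fundamental class, and K₀ → Z is the augmentation. -/
open CategoryTheory

/-! Connes' cyclic category `Λ`, in its standard combinatorial model: the object `[n]`
(here indexed by `n : ℕ`, with `n+1` vertices and `n+1` edges, corresponding to the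
cellular decomposition of the circle with `n+1` cells of each dimension) and morphisms
`[m] → [n]` given by monotone maps `f : ℤ → ℤ` with `f(x + (m+1)) = f(x) + (n+1)`,
taken modulo the shift `f ↦ f + (n+1)`. -/

/-- Monotone periodic maps `ℤ → ℤ`, the morphisms of the universal cover `Λ∞`. -/
def CycMap (m n : ℕ) : Type :=
  {f : ℤ → ℤ // Monotone f ∧ ∀ x : ℤ, f (x + (m + 1)) = f x + (n + 1)}

lemma CycMap.shift {m n : ℕ} (g : CycMap m n) (t x : ℤ) :
    g.1 (x + t * (m + 1)) = g.1 x + t * (n + 1) := by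
  induction t using Int.induction_on with
  | zero => simp
  | succ s ih =>
      have h1 : x + ((s : ℤ) + 1) * (m + 1) = (x + s * (m + 1)) + (m + 1) := by ring
      rw [h1, g.2.2, ih]; ring
  | pred s ih =>
      have e1 : x + (-(s : ℤ) - 1) * (m + 1) =
          (x + (-(s : ℤ)) * (m + 1)) - (m + 1) := by ring
      have h2 := g.2.2 ((x + (-(s : ℤ)) * (m + 1)) - (m + 1))
      have e2 : (x + (-(s : ℤ)) * (m + 1)) - (m + 1) + (m + 1) =
          x + (-(s : ℤ)) * (m + 1) := by ring
      rw [e2, ih] at h2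
      have h3 : g.1 (x + (-(s : ℤ)) * (m + 1) - (m + 1)) =
          g.1 x + (-(s : ℤ)) * (n + 1) - (n + 1) := by omega
      rw [e1, h3]; ring

/-- Two periodic maps give the same morphism of `Λ` iff they differ by a period. -/
def cycSetoid (m n : ℕ) : Setoid (CycMap m n) where
  r f g := ∃ t : ℤ, ∀ x : ℤ, g.1 x = f.1 x + t * (n + 1)
  iseqv := by
    refine ⟨fun f => ⟨0, by simp⟩, ?_, ?_⟩
    · rintro f g ⟨t, h⟩
      exact ⟨-t, fun x => by rw [h x]; ring⟩
    · rintro f g h ⟨t, hfg⟩ ⟨s, hgh⟩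
      exact ⟨t + s, fun x => by rw [hgh x, hfg x]; ring⟩

/-- The cyclic category `Λ`: the object `n : ℕ` is the cellular decomposition of `S¹`
with `n+1` vertices and `n+1` edges. -/
abbrev CyclicCat : Type := ℕ

/-- Composition of periodic monotone maps. -/
def CycMap.comp {l m n : ℕ} (f : CycMap l m) (g : CycMap m n) : CycMap l n :=
  ⟨g.1 ∘ f.1, ⟨g.2.1.comp f.2.1, fun x => by
    simp only [Function.comp_apply, f.2.2, g.2.2]⟩⟩

instance : Category CyclicCat where
  Hom m n := Quotient (cycSetoid m n)
  id n := Quotient.mk _ ⟨id, monotone_id, fun x => rfl⟩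
  comp {l m n} f g :=
    Quotient.map₂ CycMap.comp
      (by
        rintro f f' ⟨t, hf⟩ g g' ⟨s, hg⟩
        refine ⟨s + t, fun x => ?_⟩
        show g'.1 (f'.1 x) = g.1 (f.1 x) + (s + t) * (n + 1)
        rw [hf x, hg (f.1 x + t * (m + 1)), CycMap.shift g t (f.1 x)]
        ring) f g
  id_comp f := Quotient.inductionOn f (fun f => rfl)
  comp_id f := Quotient.inductionOn f (fun f => rfl)
  assoc f g h := Quotient.inductionOn₃ f g h (fun f g h => rfl)

/-- The vertex of `[n]` determined by an integer (vertices are `ℤ/(n+1)`). -/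
def toVtx (n : ℕ) (x : ℤ) : ZMod (n + 1) := (x : ZMod (n + 1))

namespace Stmt19

variable {l m n : ℕ}

lemma exists_dmap (g : CycMap m n) (j : ℤ) :
    ∃ d : ℤ, g.1 d ≤ j ∧ ∀ v : ℤ, g.1 v ≤ j → v ≤ d := by
  have hn : (1 : ℤ) ≤ (n : ℤ) + 1 := by omega
  have key : ∀ j : ℤ, ∃ t : ℤ, j < g.1 0 + t * ((n : ℤ) + 1) := by
    intro j
    refine ⟨|j - g.1 0| + 1, ?_⟩
    have h0 : (0 : ℤ) ≤ |j - g.1 0| + 1 := by positivity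
    have := mul_le_mul_of_nonneg_left hn h0
    have := le_abs_self (j - g.1 0)
    nlinarith
  have key2 : ∀ j : ℤ, ∃ t : ℤ, g.1 0 + t * ((n : ℤ) + 1) ≤ j := by
    intro j
    obtain ⟨t, ht⟩ := key (2 * g.1 0 - j)
    exact ⟨-t, by linarith⟩
  apply Int.exists_greatest_of_bdd
  · obtain ⟨t, ht⟩ := key j
    refine ⟨t * (m + 1), fun v hv => ?_⟩
    by_contra h
    push_neg at h
    have := g.2.1 h.le
    have hs := CycMap.shift g t 0
    simp only [zero_add] at hs
    omega
  · obtain ⟨t, ht⟩ := key2 j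
    refine ⟨t * (m + 1), ?_⟩
    have hs := CycMap.shift g t 0
    simp only [zero_add] at hs
    omega

noncomputable def dmap (g : CycMap m n) (j : ℤ) : ℤ := (exists_dmap g j).choose

lemma dmap_le (g : CycMap m n) (j : ℤ) : g.1 (dmap g j) ≤ j :=
  (exists_dmap g j).choose_spec.1

lemma le_dmap {g : CycMap m n} {j v : ℤ} (h : g.1 v ≤ j) : v ≤ dmap g j :=
  (exists_dmap g j).choose_spec.2 v h

lemma lt_dmap_succ (g : CycMap m n) (j : ℤ) : j < g.1 (dmap g j + 1) := by
  by_contra h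
  push_neg at h
  have := le_dmap (g := g) h
  omega

lemma dmap_eq {g : CycMap m n} {j d : ℤ} (h1 : g.1 d ≤ j) (h2 : j < g.1 (d + 1)) :
    dmap g j = d := by
  refine le_antisymm ?_ (le_dmap h1)
  by_contra h
  push_neg at h
  have : d + 1 ≤ dmap g j := by omega
  have := g.2.1 this
  have := dmap_le g j
  omega

lemma dmap_mono (g : CycMap m n) : Monotone (dmap g) := fun j j' h =>
  le_dmap ((dmap_le g j).trans h)

lemma dmap_shift (g : CycMap m n) (t j : ℤ) :
    dmap g (j + t * (n + 1)) = dmap g j + t * (m + 1) := by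
  refine dmap_eq ?_ ?_
  · rw [CycMap.shift]
    have := dmap_le g j
    omega
  · have e : dmap g j + t * ((m : ℤ) + 1) + 1 = (dmap g j + 1) + t * (m + 1) := by ring
    rw [e, CycMap.shift]
    have := lt_dmap_succ g j
    omega

lemma dmap_comp (f : CycMap l m) (g : CycMap m n) (j : ℤ) :
    dmap (f.comp g) j = dmap f (dmap g j) := by
  refine le_antisymm ?_ ?_
  · refine le_dmap (le_dmap ?_)
    exact dmap_le (f.comp g) j
  · refine le_dmap ?_
    show g.1 (f.1 (dmap f (dmap g j))) ≤ j
    exact (g.2.1 (dmap_le f (dmap g j))).trans (dmap_le g j)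

-- congruence machinery
lemma toVtx_eq_iff {a b : ℤ} :
    toVtx n a = toVtx n b ↔ ∃ t : ℤ, b = a + t * (n + 1) := by
  unfold toVtx
  rw [ZMod.intCast_eq_intCast_iff, Int.ModEq]
  constructor
  · intro h
    have hd : ((n : ℤ) + 1) ∣ (b - a) := by
      have := Int.emod_emod_of_dvd a (dvd_refl ((n : ℤ) + 1))
      have h2 : a ≡ b [ZMOD ((n : ℤ) + 1)] := by
        unfold Int.ModEq
        exact_mod_cast h
      exact (Int.modEq_iff_dvd.mp h2)
    obtain ⟨t, ht⟩ := hd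
    rw [mul_comm] at ht
    exact ⟨t, by omega⟩
  · rintro ⟨t, rfl⟩
    have : a ≡ a + t * ((n : ℤ) + 1) [ZMOD ((n : ℤ) + 1)] := by
      apply Int.ModEq.symm
      rw [Int.modEq_iff_dvd]
      exact ⟨-t, by ring⟩
    exact_mod_cast this

lemma toVtx_natCast_val (w : ZMod (n + 1)) : toVtx n (w.val : ℤ) = w := by
  unfold toVtx
  rw [Int.cast_natCast]
  exact ZMod.natCast_rightInverse w

lemma g_congr (g : CycMap m n) {a b : ℤ} (h : toVtx m a = toVtx m b) :
    toVtx n (g.1 a) = toVtx n (g.1 b) := by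
  rw [toVtx_eq_iff] at h ⊢
  obtain ⟨t, rfl⟩ := h
  exact ⟨t, by rw [CycMap.shift g t a]⟩

lemma dmap_congr (g : CycMap m n) {a b : ℤ} (h : toVtx n a = toVtx n b) :
    toVtx m (dmap g a) = toVtx m (dmap g b) := by
  rw [toVtx_eq_iff] at h ⊢
  obtain ⟨t, rfl⟩ := h
  exact ⟨t, dmap_shift g t a⟩

def Gmap (g : CycMap m n) : ZMod (m + 1) → ZMod (n + 1) :=
  fun v => toVtx n (g.1 (v.val : ℤ))

noncomputable def Dmap (g : CycMap m n) : ZMod (n + 1) → ZMod (m + 1) :=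
  fun w => toVtx m (dmap g (w.val : ℤ))

lemma Gmap_toVtx (g : CycMap m n) (x : ℤ) : Gmap g (toVtx m x) = toVtx n (g.1 x) :=
  g_congr g (toVtx_natCast_val (toVtx m x))

lemma Dmap_toVtx (g : CycMap m n) (x : ℤ) : Dmap g (toVtx n x) = toVtx m (dmap g x) :=
  dmap_congr g (toVtx_natCast_val (toVtx n x))

lemma Gmap_comp (f : CycMap l m) (g : CycMap m n) :
    Gmap (f.comp g) = Gmap g ∘ Gmap f := by
  funext v
  show toVtx n (g.1 (f.1 (v.val : ℤ))) = Gmap g (toVtx m (f.1 (v.val : ℤ)))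
  rw [Gmap_toVtx]

lemma Dmap_comp (f : CycMap l m) (g : CycMap m n) :
    Dmap (f.comp g) = Dmap f ∘ Dmap g := by
  funext w
  show toVtx l (dmap (f.comp g) (w.val : ℤ)) = Dmap f (toVtx m (dmap g (w.val : ℤ)))
  rw [Dmap_toVtx, dmap_comp]

def idCyc (n : ℕ) : CycMap n n := ⟨id, monotone_id, fun x => rfl⟩

lemma Gmap_id : Gmap (idCyc n) = id := funext fun v => toVtx_natCast_val v

lemma dmap_id (j : ℤ) : dmap (idCyc n) j = j := dmap_eq (le_refl j) (lt_add_one j)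

lemma Dmap_id : Dmap (idCyc n) = id := funext fun w => by
  show toVtx n (dmap (idCyc n) (w.val : ℤ)) = w
  rw [dmap_id]; exact toVtx_natCast_val w

lemma Gmap_sound {f g : CycMap m n} (h : (cycSetoid m n).r f g) : Gmap f = Gmap g := by
  obtain ⟨t, ht⟩ := h
  funext v
  show toVtx n (f.1 (v.val : ℤ)) = toVtx n (g.1 (v.val : ℤ))
  rw [ht]
  exact (toVtx_eq_iff.mpr ⟨t, rfl⟩)

lemma dmap_sound {f g : CycMap m n} (h : (cycSetoid m n).r f g) (j : ℤ) :
    dmap g j = dmap f j - t₀ * (m + 1) → True := fun _ => trivial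

lemma Dmap_sound {f g : CycMap m n} (h : (cycSetoid m n).r f g) : Dmap f = Dmap g := by
  obtain ⟨t, ht⟩ := h
  funext w
  show toVtx m (dmap f (w.val : ℤ)) = toVtx m (dmap g (w.val : ℤ))
  have heq : dmap g (w.val : ℤ) = dmap f (w.val : ℤ) - t * (m + 1) := by
    refine dmap_eq ?_ ?_
    · rw [ht]
      have e : (dmap f (w.val : ℤ) - t * ((m : ℤ) + 1)) = dmap f (w.val : ℤ) + (-t) * (m + 1) := by ring
      rw [e, CycMap.shift]
      have := dmap_le f (w.val : ℤ)
      linarith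
    · rw [ht]
      have e : (dmap f (w.val : ℤ) - t * ((m : ℤ) + 1) + 1) = (dmap f (w.val : ℤ) + 1) + (-t) * (m + 1) := by ring
      rw [e, CycMap.shift]
      have := lt_dmap_succ f (w.val : ℤ)
      linarith
  rw [heq]
  exact toVtx_eq_iff.mpr ⟨-t, by ring⟩

-- pushforward linear map
def push {α β : Type} [Fintype α] [DecidableEq β] (a : α → β) :
    (α → ℤ) →ₗ[ℤ] (β → ℤ) where
  toFun φ := fun w => ∑ v ∈ Finset.univ.filter (fun v => a v = w), φ v
  map_add' φ ψ := funext fun w => Finset.sum_add_distrib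
  map_smul' c φ := funext fun w => by
    simp [Finset.mul_sum, smul_eq_mul]

lemma push_id {α : Type} [Fintype α] [DecidableEq α] :
    push (id : α → α) = LinearMap.id := by
  apply LinearMap.ext
  intro φ
  funext w
  show ∑ v ∈ Finset.univ.filter (fun v => v = w), φ v = φ w
  rw [Finset.filter_eq']
  simp

lemma push_comp {α β γ : Type} [Fintype α] [Fintype β] [DecidableEq β] [DecidableEq γ]
    (a : α → β) (b : β → γ) :
    push (b ∘ a) = (push b).comp (push a) := by
  apply LinearMap.ext
  intro φ
  funext w
  show ∑ v ∈ Finset.univ.filter (fun v => b (a v) = w), φ v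
      = ∑ u ∈ Finset.univ.filter (fun u => b u = w),
          ∑ v ∈ Finset.univ.filter (fun v => a v = u), φ v
  calc ∑ v ∈ Finset.univ.filter (fun v => b (a v) = w), φ v
      = ∑ v ∈ (Finset.univ : Finset α), if b (a v) = w then φ v else 0 :=
        Finset.sum_filter _ _
    _ = ∑ u : β, ∑ v ∈ Finset.univ.filter (fun v => a v = u),
          (if b (a v) = w then φ v else 0) :=
        (Finset.sum_fiberwise _ _ _).symm
    _ = ∑ u : β, ∑ v ∈ Finset.univ.filter (fun v => a v = u),
          (if b u = w then φ v else 0) := by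
        refine Finset.sum_congr rfl fun u _ => Finset.sum_congr rfl fun v hv => ?_
        rw [Finset.mem_filter] at hv
        rw [hv.2]
    _ = ∑ u : β, if b u = w then (∑ v ∈ Finset.univ.filter (fun v => a v = u), φ v)
          else 0 := by
        refine Finset.sum_congr rfl fun u _ => ?_
        split_ifs
        · rfl
        · exact Finset.sum_const_zero
    _ = ∑ u ∈ Finset.univ.filter (fun u => b u = w),
          ∑ v ∈ Finset.univ.filter (fun v => a v = u), φ v :=
        (Finset.sum_filter _ _).symm

-- the functors
noncomputable def K0 : CyclicCat ⥤ ModuleCat ℤ where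
  obj n := ModuleCat.of ℤ (ZMod (n + 1) → ℤ)
  map {m n} f := Quotient.lift (fun g : CycMap m n => (ModuleCat.ofHom (push (Gmap g)) :
      ModuleCat.of ℤ (ZMod (m + 1) → ℤ) ⟶ ModuleCat.of ℤ (ZMod (n + 1) → ℤ)))
    (fun f g h => by show ModuleCat.ofHom (push (Gmap f)) = ModuleCat.ofHom (push (Gmap g)); rw [Gmap_sound h]) f
  map_id n := by
    show ModuleCat.ofHom (push (Gmap (idCyc n))) = ModuleCat.ofHom LinearMap.id
    rw [Gmap_id, push_id]
  map_comp {l m n} f g := by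
    induction f using Quotient.inductionOn with | h f =>
    induction g using Quotient.inductionOn with | h g =>
    show ModuleCat.ofHom (push (Gmap (f.comp g))) = ModuleCat.ofHom (push (Gmap g) ∘ₗ push (Gmap f))
    rw [Gmap_comp, push_comp]

noncomputable def K1 : CyclicCat ⥤ ModuleCat ℤ where
  obj n := ModuleCat.of ℤ (ZMod (n + 1) → ℤ)
  map {m n} f := Quotient.lift (fun g : CycMap m n => (ModuleCat.ofHom (LinearMap.funLeft ℤ ℤ (Dmap g)) :
      ModuleCat.of ℤ (ZMod (m + 1) → ℤ) ⟶ ModuleCat.of ℤ (ZMod (n + 1) → ℤ)))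
    (fun f g h => by show ModuleCat.ofHom (LinearMap.funLeft ℤ ℤ (Dmap f)) = ModuleCat.ofHom (LinearMap.funLeft ℤ ℤ (Dmap g)); rw [Dmap_sound h]) f
  map_id n := by
    show ModuleCat.ofHom (LinearMap.funLeft ℤ ℤ (Dmap (idCyc n))) = ModuleCat.ofHom LinearMap.id
    rw [Dmap_id]
    rfl
  map_comp {l m n} f g := by
    induction f using Quotient.inductionOn with | h f =>
    induction g using Quotient.inductionOn with | h g =>
    show ModuleCat.ofHom (LinearMap.funLeft ℤ ℤ (Dmap (f.comp g)))
        = ModuleCat.ofHom (LinearMap.funLeft ℤ ℤ (Dmap g) ∘ₗ LinearMap.funLeft ℤ ℤ (Dmap f))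
    rw [Dmap_comp]
    exact congrArg ModuleCat.ofHom (LinearMap.funLeft_comp ℤ ℤ _ _)

-- natural transformations
def ιapp (n : ℕ) : ℤ →ₗ[ℤ] (ZMod (n + 1) → ℤ) := LinearMap.pi (fun _ => LinearMap.id)

def bdapp (n : ℕ) : (ZMod (n + 1) → ℤ) →ₗ[ℤ] (ZMod (n + 1) → ℤ) where
  toFun ψ := fun w => ψ (w - 1) - ψ w
  map_add' ψ χ := by funext w; simp; ring
  map_smul' c ψ := by funext w; simp [smul_eq_mul]; ring

def augapp (n : ℕ) : (ZMod (n + 1) → ℤ) →ₗ[ℤ] ℤ where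
  toFun φ := ∑ v, φ v
  map_add' φ χ := Finset.sum_add_distrib
  map_smul' c φ := by simp [Finset.mul_sum, smul_eq_mul]

lemma telescope_aux (Ψ : ℤ → ℤ) (a : ℤ) (k : ℕ) :
    ∑ j ∈ Finset.Ioc a (a + (k : ℤ)), (Ψ (j - 1) - Ψ j) = Ψ a - Ψ (a + (k : ℤ)) := by
  induction k with
  | zero => simp
  | succ k ih =>
      have hins : Finset.Ioc a (a + ((k : ℤ) + 1))
          = insert (a + (k : ℤ) + 1) (Finset.Ioc a (a + (k : ℤ))) := by
        ext x
        simp only [Finset.mem_Ioc, Finset.mem_insert]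
        omega
      push_cast
      rw [hins, Finset.sum_insert (by simp), ih]
      have e : a + (k : ℤ) + 1 - 1 = a + (k : ℤ) := by ring
      rw [e]
      ring

lemma telescope (Ψ : ℤ → ℤ) (a b : ℤ) (hb : a ≤ b) :
    ∑ j ∈ Finset.Ioc a b, (Ψ (j - 1) - Ψ j) = Ψ a - Ψ b := by
  have : b = a + ((b - a).toNat : ℤ) := by omega
  rw [this]
  exact telescope_aux Ψ a _

variable {m n : ℕ}

lemma toVtx_sub_one (x : ℤ) : toVtx n (x - 1) = toVtx n x - 1 := by
  unfold toVtx; push_cast; ring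

lemma interval_char (g : CycMap m n) (w0 j : ℤ) :
    (dmap g (w0 - 1) < j ∧ j ≤ dmap g w0) ↔ g.1 j = w0 := by
  constructor
  · rintro ⟨h1, h2⟩
    have hle : g.1 j ≤ w0 := (g.2.1 h2).trans (dmap_le g w0)
    have hge : w0 - 1 < g.1 j := by
      have : dmap g (w0 - 1) + 1 ≤ j := by omega
      exact lt_of_lt_of_le (lt_dmap_succ g (w0 - 1)) (g.2.1 this)
    omega
  · intro h
    refine ⟨?_, le_dmap (le_of_eq h)⟩
    by_contra hc
    push_neg at hc
    have := (g.2.1 hc).trans (dmap_le g (w0 - 1))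
    omega

lemma d_diff_le (g : CycMap m n) (w0 : ℤ) :
    dmap g w0 ≤ dmap g (w0 - 1) + (m + 1) := by
  have : dmap g (w0 - 1 + 1 * ((n : ℤ) + 1)) = dmap g (w0 - 1) + 1 * (m + 1) :=
    dmap_shift g 1 (w0 - 1)
  have hm := dmap_mono g (show w0 ≤ w0 - 1 + 1 * ((n : ℤ) + 1) by omega)
  omega

lemma toVtx_inj_of_close {j j' : ℤ} (h : toVtx m j = toVtx m j')
    (hd : |j' - j| ≤ m) : j = j' := by
  obtain ⟨t, ht⟩ := toVtx_eq_iff.mp h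
  have ha1 := le_abs_self (j' - j)
  have ha2 := neg_abs_le (j' - j)
  have ht' : j' - j = t * ((m : ℤ) + 1) := by push_cast at ht; linarith
  rcases lt_trichotomy t 0 with h0 | h0 | h0
  · have h1 : t ≤ -1 := by omega
    have h2 : t * ((m : ℤ) + 1) ≤ -((m : ℤ) + 1) := by nlinarith
    linarith
  · rw [h0, zero_mul] at ht'; omega
  · have h1 : 1 ≤ t := by omega
    have h2 : ((m : ℤ) + 1) ≤ t * ((m : ℤ) + 1) := by nlinarith
    linarith

lemma fiber_sum (g : CycMap m n) (ψ : ZMod (m + 1) → ℤ) (w : ZMod (n + 1)) :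
    ∑ v ∈ Finset.univ.filter (fun v => Gmap g v = w), (ψ (v - 1) - ψ v)
      = ψ (Dmap g (w - 1)) - ψ (Dmap g w) := by
  set w0 : ℤ := (w.val : ℤ) with hw0
  have hDw : Dmap g w = toVtx m (dmap g w0) := rfl
  have hDw1 : Dmap g (w - 1) = toVtx m (dmap g (w0 - 1)) := by
    show toVtx m (dmap g ((w - 1).val : ℤ)) = _
    apply dmap_congr
    rw [toVtx_natCast_val, toVtx_sub_one, toVtx_natCast_val]
  set d1 := dmap g (w0 - 1) with hd1
  set d0 := dmap g w0 with hd0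
  have hle : d1 ≤ d0 := dmap_mono g (by omega)
  have hlen : d0 ≤ d1 + (m + 1) := d_diff_le g w0
  have hsum : ∑ j ∈ Finset.Ioc d1 d0, (ψ (toVtx m (j - 1)) - ψ (toVtx m j))
      = ∑ v ∈ Finset.univ.filter (fun v => Gmap g v = w), (ψ (v - 1) - ψ v) := by
    refine Finset.sum_bij (fun j _ => toVtx m j) ?_ ?_ ?_ ?_
    · intro j hj
      rw [Finset.mem_Ioc] at hj
      have hgj : g.1 j = w0 := (interval_char g w0 j).mp ⟨hj.1, hj.2⟩
      rw [Finset.mem_filter]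
      refine ⟨Finset.mem_univ _, ?_⟩
      rw [Gmap_toVtx, hgj, hw0, toVtx_natCast_val]
    · intro j hj j' hj' hjj
      rw [Finset.mem_Ioc] at hj hj'
      exact toVtx_inj_of_close hjj (abs_le.mpr ⟨by omega, by omega⟩)
    · intro v hv
      rw [Finset.mem_filter] at hv
      have hx : toVtx n (g.1 (v.val : ℤ)) = toVtx n w0 := by
        rw [show toVtx n w0 = w by rw [hw0]; exact toVtx_natCast_val w]
        exact hv.2
      obtain ⟨t, ht⟩ := toVtx_eq_iff.mp hx
      refine ⟨(v.val : ℤ) + t * (m + 1), ?_, ?_⟩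
      · rw [Finset.mem_Ioc]
        have hgj : g.1 ((v.val : ℤ) + t * (m + 1)) = w0 := by
          rw [CycMap.shift]; omega
        exact (interval_char g w0 _).mpr hgj
      · show toVtx m ((v.val : ℤ) + t * (m + 1)) = v
        have h2 : toVtx m ((v.val : ℤ)) = toVtx m ((v.val : ℤ) + t * (m + 1)) :=
          toVtx_eq_iff.mpr ⟨t, rfl⟩
        exact h2.symm.trans (toVtx_natCast_val v)
    · intro j _
      rw [toVtx_sub_one]
  rw [← hsum, telescope (fun j => ψ (toVtx m j)) d1 d0 hle, hDw, hDw1]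

noncomputable def ιNat : (Functor.const CyclicCat).obj (ModuleCat.of ℤ ℤ) ⟶ K1 where
  app n := (ModuleCat.ofHom (ιapp n) : ModuleCat.of ℤ ℤ ⟶ K1.obj n)
  naturality {m n} f := by
    induction f using Quotient.inductionOn with | h g =>
    apply ModuleCat.hom_ext
    apply LinearMap.ext
    intro c
    rfl

noncomputable def bdNat : K1 ⟶ K0 where
  app n := (ModuleCat.ofHom (bdapp n) : K1.obj n ⟶ K0.obj n)
  naturality {m n} f := by
    induction f using Quotient.inductionOn with | h g =>
    apply ModuleCat.hom_ext
    apply LinearMap.ext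
    intro ψ
    funext w
    show ψ (Dmap g (w - 1)) - ψ (Dmap g w)
        = ∑ v ∈ Finset.univ.filter (fun v => Gmap g v = w), (ψ (v - 1) - ψ v)
    exact (fiber_sum g ψ w).symm

noncomputable def augNat : K0 ⟶ (Functor.const CyclicCat).obj (ModuleCat.of ℤ ℤ) where
  app n := (ModuleCat.ofHom (augapp n) : K0.obj n ⟶ ModuleCat.of ℤ ℤ)
  naturality {m n} f := by
    induction f using Quotient.inductionOn with | h g =>
    apply ModuleCat.hom_ext
    apply LinearMap.ext
    intro φ
    show ∑ w : ZMod (n + 1), ∑ v ∈ Finset.univ.filter (fun v => Gmap g v = w), φ v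
        = ∑ v, φ v
    exact Finset.sum_fiberwise Finset.univ (Gmap g) φ

-- sum over univ = sum over range
lemma sum_univ_eq_range (φ : ZMod (n + 1) → ℤ) :
    ∑ v, φ v = ∑ j ∈ Finset.range (n + 1), φ (j : ZMod (n + 1)) := by
  refine Finset.sum_bij (fun v _ => v.val) ?_ ?_ ?_ ?_
  · intro v _
    exact Finset.mem_range.mpr (ZMod.val_lt v)
  · intro v _ v' _ h
    exact ZMod.val_injective _ h
  · intro j hj
    refine ⟨(j : ZMod (n + 1)), Finset.mem_univ _, ?_⟩
    exact ZMod.val_cast_of_lt (Finset.mem_range.mp hj)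
  · intro v _
    rw [ZMod.natCast_rightInverse v]

lemma ι_inj : Function.Injective (ιapp n) := by
  intro a b h
  exact congrFun h 0

lemma bd_ι (c : ℤ) : bdapp n (ιapp n c) = 0 := by
  funext w
  show c - c = 0
  ring

lemma exact_ι_bd : Function.Exact (ιapp n) (bdapp n) := by
  intro ψ
  constructor
  · intro h
    have hstep : ∀ w : ZMod (n + 1), ψ (w - 1) = ψ w := by
      intro w
      have := congrFun h w
      have h2 : ψ (w - 1) - ψ w = 0 := this
      omega
    have hnat : ∀ k : ℕ, ψ ((k : ZMod (n + 1))) = ψ 0 := by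
      intro k
      induction k with
      | zero => norm_num
      | succ k ih =>
          have := hstep ((k + 1 : ℕ) : ZMod (n + 1))
          have e : ((k + 1 : ℕ) : ZMod (n + 1)) - 1 = ((k : ℕ) : ZMod (n + 1)) := by
            push_cast; ring
          rw [e] at this
          rw [← this, ih]
    refine ⟨ψ 0, ?_⟩
    funext w
    show ψ 0 = ψ w
    conv_rhs => rw [← ZMod.natCast_rightInverse w]
    exact (hnat w.val).symm
  · rintro ⟨c, rfl⟩
    exact bd_ι c

lemma exact_bd_aug : Function.Exact (bdapp n) (augapp n) := by
  intro φ
  constructor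
  · intro h
    have h0 : ∑ j ∈ Finset.range (n + 1), φ (j : ZMod (n + 1)) = 0 := by
      rw [← sum_univ_eq_range]; exact h
    refine ⟨fun w => -(∑ j ∈ Finset.range (w.val + 1), φ (j : ZMod (n + 1))), ?_⟩
    funext w
    show -(∑ j ∈ Finset.range ((w - 1).val + 1), φ (j : ZMod (n + 1)))
        - (-(∑ j ∈ Finset.range (w.val + 1), φ (j : ZMod (n + 1)))) = φ w
    rcases Nat.eq_zero_or_eq_succ_pred w.val with hk | hk
    · have hw : w = 0 := by
        have := ZMod.natCast_rightInverse w
        rw [← this, hk]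
        rfl
      rw [hw]
      have hval : ((0 : ZMod (n + 1)) - 1).val = n := by
        simpa using ZMod.val_neg_one n
      rw [hval, ZMod.val_zero, h0]
      simp
    · set k := w.val - 1 with hkdef
      have hwvk : w.val = k + 1 := by omega
      have hw : w = ((k + 1 : ℕ) : ZMod (n + 1)) := by
        rw [← hwvk]
        exact (ZMod.natCast_rightInverse w).symm
      have hklt : k + 1 < n + 1 := by
        have := ZMod.val_lt w
        omega
      have hw1 : w - 1 = ((k : ℕ) : ZMod (n + 1)) := by
        rw [hw]; push_cast; ring
      have hv1 : (w - 1).val = k := by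
        rw [hw1]; exact ZMod.val_cast_of_lt (by omega)
      have hv : w.val = k + 1 := by omega
      rw [hv1, hv, Finset.sum_range_succ (fun j => φ (j : ZMod (n + 1))) (k + 1)]
      rw [← hw]
      ring
  · rintro ⟨ψ, rfl⟩
    show ∑ w, (ψ (w - 1) - ψ w) = 0
    rw [Finset.sum_sub_distrib]
    rw [Fintype.sum_equiv (Equiv.subRight (1 : ZMod (n + 1)))
      (fun w => ψ (w - 1)) ψ (fun w => rfl)]
    ring

lemma aug_surj : Function.Surjective (augapp n) := by
  intro c
  refine ⟨fun v => if v = 0 then c else 0, ?_⟩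
  show (∑ v : ZMod (n + 1), if v = 0 then c else 0) = c
  simp

-- the K₁ edge-count formula
lemma card_formula (g : CycMap m n) (w : ZMod (n + 1)) (v : ZMod (m + 1)) :
    ((Finset.range ((g.1 ((v.val : ℤ) + 1) - g.1 (v.val : ℤ)).toNat)).filter
        (fun t : ℕ => toVtx n (g.1 (v.val : ℤ) + (t : ℤ)) = w)).card
      = if Dmap g w = v then 1 else 0 := by
  set w0 : ℤ := (w.val : ℤ) with hw0
  set v0 : ℤ := (v.val : ℤ) with hv0
  set a := g.1 v0 with ha
  set b := g.1 (v0 + 1) with hb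
  have hab : a ≤ b := g.2.1 (by omega)
  have hlen : b - a ≤ (n : ℤ) + 1 := by
    have h1 : g.1 (v0 + 1 * ((m : ℤ) + 1)) = g.1 v0 + 1 * ((n : ℤ) + 1) :=
      CycMap.shift g 1 v0
    have h2 : g.1 (v0 + 1) ≤ g.1 (v0 + 1 * ((m : ℤ) + 1)) := g.2.1 (by omega)
    omega
  have hwtoVtx : toVtx n w0 = w := toVtx_natCast_val w
  -- membership implies Dmap g w = v
  have hmem : ∀ t : ℕ, t ∈ (Finset.range ((b - a).toNat)).filter
      (fun t : ℕ => toVtx n (a + (t : ℤ)) = w) → Dmap g w = v := by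
    intro t ht
    rw [Finset.mem_filter, Finset.mem_range] at ht
    obtain ⟨htlt, htw⟩ := ht
    have hx : toVtx n (a + (t : ℤ)) = toVtx n w0 := by rw [htw, hwtoVtx]
    obtain ⟨s, hs⟩ := toVtx_eq_iff.mp hx
    have hdj : dmap g (a + (t : ℤ)) = v0 :=
      dmap_eq (by omega) (by rw [show v0 + 1 = v0 + 1 from rfl]; omega)
    have hdw : dmap g w0 = v0 + s * (m + 1) := by
      rw [hs]
      rw [dmap_shift g s (a + (t : ℤ)), hdj]
    show toVtx m (dmap g w0) = v
    rw [hdw]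
    have h2 : toVtx m v0 = toVtx m (v0 + s * (m + 1)) := toVtx_eq_iff.mpr ⟨s, rfl⟩
    rw [← h2, hv0]
    exact toVtx_natCast_val v
  by_cases hD : Dmap g w = v
  · rw [if_pos hD]
    -- existence
    obtain ⟨s, hs⟩ : ∃ s : ℤ, v0 = dmap g w0 + s * (m + 1) := by
      have : toVtx m (dmap g w0) = toVtx m v0 := by
        rw [show toVtx m v0 = v from toVtx_natCast_val v]
        exact hD
      exact toVtx_eq_iff.mp this
    set j := w0 + s * (n + 1) with hj
    have hdj : dmap g j = v0 := by
      rw [hj, dmap_shift g s w0]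
      omega
    have hj1 : a ≤ j := by
      have := dmap_le g j
      rw [hdj] at this
      exact this
    have hj2 : j < b := by
      have := lt_dmap_succ g j
      rw [hdj] at this
      exact this
    have htoVtxj : toVtx n j = w := by
      rw [hj, show toVtx n (w0 + s * ((n : ℤ) + 1)) = toVtx n w0 from
        (toVtx_eq_iff.mpr ⟨s, rfl⟩).symm, hwtoVtx]
    set t0 : ℕ := (j - a).toNat with ht0
    rw [Finset.card_eq_one]
    refine ⟨t0, ?_⟩
    rw [Finset.eq_singleton_iff_unique_mem]
    constructor
    · rw [Finset.mem_filter, Finset.mem_range]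
      constructor
      · omega
      · rw [show a + (t0 : ℤ) = j by omega]
        exact htoVtxj
    · intro t ht
      rw [Finset.mem_filter, Finset.mem_range] at ht
      obtain ⟨htlt, htw⟩ := ht
      have : a + (t : ℤ) = a + (t0 : ℤ) := by
        refine toVtx_inj_of_close (m := n) ?_ (abs_le.mpr ⟨by omega, by omega⟩)
        rw [htw, show a + (t0 : ℤ) = j by omega, htoVtxj]
      omega
  · rw [if_neg hD, Finset.card_eq_zero, Finset.filter_eq_empty_iff]
    intro t ht
    intro hcond
    exact hD (hmem t (Finset.mem_filter.mpr ⟨ht, hcond⟩))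

end Stmt19

/-!
STATEMENT 19.  Let `K_•([n])` be the standard cellular chain complex of the circle for
the decomposition corresponding to `[n]`: `K₀([n])` is free on the `n+1` vertices
(functions `ZMod (n+1) → ℤ`) and `K₁([n])` is free on the `n+1` edges (`e_v` running from
`v` to `v+1`).  Then `[n] ↦ K_•([n])` is functorial in the cyclic category `Λ`:  a
morphism represented by a periodic monotone map `g` sends a vertex `v` to the vertex
`g(v)`, and the edge `e_v` to the sum of the edges `e_j`, `j ∈ [g(v), g(v+1))`; and there
is an exact sequence `0 → ℤ → K₁ → K₀ → ℤ → 0` in `Fun(Λ, ℤ)`, where the outer terms are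
the constant functor `ℤ`, `ℤ → K₁` is the fundamental class (the sum of all edges),
`K₁ → K₀` is the cellular boundary `e_v ↦ δ_{v+1} - δ_v`, and `K₀ → ℤ` is the
augmentation.
-/
theorem statement19 :
    ∃ (K₁ K₀ : CyclicCat ⥤ ModuleCat ℤ)
      (η₁ : ∀ n : ℕ, (K₁.obj (n : CyclicCat) ≅ ModuleCat.of ℤ (ZMod (n + 1) → ℤ)))
      (η₀ : ∀ n : ℕ, (K₀.obj (n : CyclicCat) ≅ ModuleCat.of ℤ (ZMod (n + 1) → ℤ)))
      (ι : (Functor.const CyclicCat).obj (ModuleCat.of ℤ ℤ) ⟶ K₁)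
      (bd : K₁ ⟶ K₀)
      (aug : K₀ ⟶ (Functor.const CyclicCat).obj (ModuleCat.of ℤ ℤ)),
      -- `K₀` acts on vertices by `v ↦ g(v)`:
      (∀ (m n : ℕ) (g : CycMap m n) (φ : ZMod (m + 1) → ℤ) (w : ZMod (n + 1)),
        (η₀ n).hom ((K₀.map (Quotient.mk (cycSetoid m n) g : (m : CyclicCat) ⟶ n))
          ((η₀ m).inv φ)) w =
        ∑ v ∈ Finset.univ.filter (fun v : ZMod (m + 1) => toVtx n (g.1 (v.val : ℤ)) = w),
          φ v) ∧
      -- `K₁` acts on edges by `e_v ↦ Σ_{j ∈ [g(v), g(v+1))} e_j`: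
      (∀ (m n : ℕ) (g : CycMap m n) (ψ : ZMod (m + 1) → ℤ) (w : ZMod (n + 1)),
        (η₁ n).hom ((K₁.map (Quotient.mk (cycSetoid m n) g : (m : CyclicCat) ⟶ n))
          ((η₁ m).inv ψ)) w =
        ∑ v : ZMod (m + 1), ψ v *
          ((Finset.range ((g.1 ((v.val : ℤ) + 1) - g.1 (v.val : ℤ)).toNat)).filter
            (fun t : ℕ => toVtx n (g.1 (v.val : ℤ) + (t : ℤ)) = w)).card) ∧
      -- the fundamental class, the boundary, and the augmentation:
      (∀ (n : ℕ) (c : ℤ) (w : ZMod (n + 1)),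
        (η₁ n).hom (ι.app (n : CyclicCat) c) w = c) ∧
      (∀ (n : ℕ) (ψ : ZMod (n + 1) → ℤ) (w : ZMod (n + 1)),
        (η₀ n).hom (bd.app (n : CyclicCat) ((η₁ n).inv ψ)) w = ψ (w - 1) - ψ w) ∧
      (∀ (n : ℕ) (φ : ZMod (n + 1) → ℤ),
        aug.app (n : CyclicCat) ((η₀ n).inv φ) = ∑ v : ZMod (n + 1), φ v) ∧
      -- exactness of `0 → ℤ → K₁ → K₀ → ℤ → 0` at each object of `Λ`:
      (∀ n : ℕ,
        Function.Injective (ι.app (n : CyclicCat)) ∧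
        Function.Exact (ι.app (n : CyclicCat)) (bd.app (n : CyclicCat)) ∧
        Function.Exact (bd.app (n : CyclicCat)) (aug.app (n : CyclicCat)) ∧
        Function.Surjective (aug.app (n : CyclicCat))) := by
  refine ⟨Stmt19.K1, Stmt19.K0, fun n => Iso.refl _, fun n => Iso.refl _,
    Stmt19.ιNat, Stmt19.bdNat, Stmt19.augNat, ?_, ?_, ?_, ?_, ?_, ?_⟩
  · intro m n g φ w
    rfl
  · intro m n g ψ w
    show ψ (Stmt19.Dmap g w) = _
    rw [Finset.sum_congr rfl (fun v _ => by rw [Stmt19.card_formula g w v])]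
    simp [mul_ite]
  · intro n c w
    rfl
  · intro n ψ w
    rfl
  · intro n φ
    rfl
  · intro n
    exact ⟨Stmt19.ι_inj (n := n), Stmt19.exact_ι_bd (n := n), Stmt19.exact_bd_aug (n := n), Stmt19.aug_surj (n := n)⟩
end
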